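/- arXiv:2202.11788 — 4 statements merged into one kernel-verified Lean document; each statement's English description precedes it below -/
import Mathlib

section
/- Let p be a discrete Markov model on [n_1]×⋯×[n_d] and let 2 ≤ k ≤ d−1 be such that the rank of the k-th unfolding matrix of p is r_k. Let B_k : [n_{k−1}]×[n_k]×[r_k] → ℝ be any tensor whose columns (as a matrix with rows indexed by (x_{k−1},x_k) and columns by α_k) are orthonormal and span the column space of the triple-marginal matrix p((x_{k−1},x_k);x_{k+1}). Then the matrix A_k : [n_k]×[r_k] → ℝ defined by A_k(x_k,α_k) = Σ_{x_{k−1}=1}^{n_{k−1}} B_k(x_{k−1},x_k,α_k) has rank r_k. -/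
open scoped BigOperators
open Matrix

/-- Indices `(x_0, …, x_{k-1})` of the first `k` variables (sizes given by `n`). -/
abbrev PreIdx (n : ℕ → ℕ) (k : ℕ) := ∀ i : Fin k, Fin (n i)

/-- Indices `(x_k, …, x_{d-1})` of the variables with position `≥ k`. -/
abbrev SufIdx (n : ℕ → ℕ) (d k : ℕ) := ∀ i : {i : Fin d // k ≤ (i : ℕ)}, Fin (n i)

/-- Indices of the variables with position in the window `[a, b)`. -/
abbrev MidIdx (n : ℕ → ℕ) (d a b : ℕ) :=
  ∀ i : {i : Fin d // a ≤ (i : ℕ) ∧ (i : ℕ) < b}, Fin (n i)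

/-- Glue a prefix index and a suffix index into a full index. -/
def glue {n : ℕ → ℕ} {d k : ℕ} (x : PreIdx n k) (y : SufIdx n d k) : PreIdx n d :=
  fun i => if h : (i : ℕ) < k then x ⟨i, h⟩ else y ⟨i, Nat.le_of_not_lt h⟩

/-- The `k`-th unfolding matrix of a `d`-dimensional tensor `p`. -/
def unfold {n : ℕ → ℕ} {d : ℕ} (p : PreIdx n d → ℝ) (k : ℕ) :
    Matrix (PreIdx n k) (SufIdx n d k) ℝ :=
  Matrix.of fun x y => p (glue x y)

/-- Column space of a matrix: span of its columns. -/
noncomputable def colSpace {R C : Type*} (M : Matrix R C ℝ) : Submodule ℝ (R → ℝ) :=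
  Submodule.span ℝ (Set.range fun c => fun r => M r c)

/-- Row space of a matrix: span of its rows. -/
noncomputable def rowSpace {R C : Type*} (M : Matrix R C ℝ) : Submodule ℝ (C → ℝ) :=
  Submodule.span ℝ (Set.range fun r => fun c => M r c)

/-- Rank of a matrix (dimension of its column space). -/
noncomputable def mrank {R C : Type*} (M : Matrix R C ℝ) : ℕ :=
  Module.finrank ℝ ↥(colSpace M)

/-- Restriction of a prefix index to the first `k` variables. -/
def takePre {n : ℕ → ℕ} {k : ℕ} (x : PreIdx n (k + 1)) : PreIdx n k :=
  fun i => x ⟨i, Nat.lt_succ_of_lt i.isLt⟩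

/-- Extend a prefix index by one more variable. -/
def snoc' {n : ℕ → ℕ} {k : ℕ} (z : PreIdx n k) (a : Fin (n k)) : PreIdx n (k + 1) :=
  fun i =>
    if h : (i : ℕ) < k then z ⟨i, h⟩
    else Fin.cast (congrArg n (by have := i.isLt; omega : k = (i : ℕ))) a

/-- A family of tensor-train cores: core `k` has shape `r k × n k × r (k+1)`.
(The first and last cores carry a dummy index of size `r 0 = 1`, `r d = 1`.) -/
abbrev CoreType (n r : ℕ → ℕ) (d : ℕ) :=
  ∀ k : Fin d, Fin (r k) → Fin (n k) → Fin (r ((k : ℕ) + 1)) → ℝ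

/-- Partial contraction of the first `k` cores. -/
noncomputable def ttPrefixF {d : ℕ} {n r : ℕ → ℕ} (G : CoreType n r d) :
    (k : ℕ) → k ≤ d → PreIdx n k → Fin (r 0) → Fin (r k) → ℝ
  | 0, _, _, a, b => if (a : ℕ) = (b : ℕ) then 1 else 0
  | k + 1, h, x, a, b =>
      ∑ c : Fin (r k),
        ttPrefixF G k (Nat.le_of_succ_le h) (takePre x) a c * G ⟨k, h⟩ c (x (Fin.last k)) b

/-- Full contraction `G_1 ∘ ⋯ ∘ G_d` of a family of tensor-train cores. -/
noncomputable def ttContract {d : ℕ} {n r : ℕ → ℕ} (G : CoreType n r d)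
    (x : PreIdx n d) : ℝ :=
  ∑ a : Fin (r 0), ∑ b : Fin (r d), ttPrefixF G d le_rfl x a b

/-- The recursively contracted left sketch functions `S_k` built from blocks `s_k`. -/
noncomputable def leftSketch {n m : ℕ → ℕ}
    (s : ∀ k : ℕ, Fin (m (k + 1)) → Fin (n k) → Fin (m k) → ℝ) :
    (k : ℕ) → Fin (m k) → PreIdx n k → ℝ
  | 0, _, _ => 1
  | k + 1, β, x => ∑ c : Fin (m k), s k β (x (Fin.last k)) c * leftSketch s k c (takePre x)

/-- The right-sketched unfolding `Φ̄_k = p ∘ T_{k+1}`. -/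
noncomputable def rightSketched {n : ℕ → ℕ} {d : ℕ} (p : PreIdx n d → ℝ)
    {ℓ : ℕ → ℕ} (T : ∀ k : ℕ, SufIdx n d k → Fin (ℓ k) → ℝ) (k : ℕ)
    (x : PreIdx n k) (γ : Fin (ℓ k)) : ℝ :=
  ∑ y : SufIdx n d k, p (glue x y) * T k y γ

/-- The doubly sketched tensor `Φ̃_{j+1} = S_j ∘ Φ̄_{j+1}`. -/
noncomputable def tildePhi {n : ℕ → ℕ} {d : ℕ} {ℓ m : ℕ → ℕ} (p : PreIdx n d → ℝ)
    (T : ∀ k : ℕ, SufIdx n d k → Fin (ℓ k) → ℝ)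
    (s : ∀ k : ℕ, Fin (m (k + 1)) → Fin (n k) → Fin (m k) → ℝ)
    (j : ℕ) (β : Fin (m j)) (xj : Fin (n j)) (γ : Fin (ℓ (j + 1))) : ℝ :=
  ∑ z : PreIdx n j, leftSketch s j β z * rightSketched p T (j + 1) (snoc' z xj) γ

/-- Marginal of `p` on the window of variables `[a, b)`. -/
noncomputable def winMarg {n : ℕ → ℕ} {d : ℕ} (p : PreIdx n d → ℝ) (a b : ℕ)
    (y : MidIdx n d a b) : ℝ :=
  ∑ z : ∀ i : {i : Fin d // (i : ℕ) < a ∨ b ≤ (i : ℕ)}, Fin (n i),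
    p fun i =>
      if h : a ≤ (i : ℕ) ∧ (i : ℕ) < b then y ⟨i, h⟩ else z ⟨i, by omega⟩

/-- Marginal of `p` on the window `[a, b)`, viewed as a matrix with rows indexed by
variables in `[a, c)` and columns by variables in `[c, b)`. -/
noncomputable def winMatrix {n : ℕ → ℕ} {d : ℕ} (p : PreIdx n d → ℝ) (a c b : ℕ) :
    Matrix (MidIdx n d a c) (MidIdx n d c b) ℝ :=
  Matrix.of fun x y =>
    ∑ z : ∀ i : {i : Fin d // (i : ℕ) < a ∨ b ≤ (i : ℕ)}, Fin (n i),
      p fun i =>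
        if h1 : a ≤ (i : ℕ) ∧ (i : ℕ) < c then x ⟨i, h1⟩
        else if h2 : c ≤ (i : ℕ) ∧ (i : ℕ) < b then y ⟨i, h2⟩
        else z ⟨i, by omega⟩

/-- A (first-order) discrete Markov model: a probability density such that for all
`2 ≤ k ≤ d - 1` (1-based), `p(x) · p_k(x_k) = p_{1:k}(x_{1:k}) · p_{k:d}(x_{k:d})`. -/
def IsMarkov {n : ℕ → ℕ} {d : ℕ} (p : PreIdx n d → ℝ) : Prop :=
  (∀ x, 0 ≤ p x) ∧ (∑ x : PreIdx n d, p x) = 1 ∧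
    ∀ k : ℕ, 2 ≤ k → k ≤ d - 1 → ∀ x : PreIdx n d,
      p x * winMarg p (k - 1) k (fun i => x i.1) =
        winMarg p 0 k (fun i => x i.1) * winMarg p (k - 1) d (fun i => x i.1)

/-- An order-`m` discrete Markov model. -/
def IsMarkovOrder {n : ℕ → ℕ} {d : ℕ} (m : ℕ) (p : PreIdx n d → ℝ) : Prop :=
  (∀ x, 0 ≤ p x) ∧ (∑ x : PreIdx n d, p x) = 1 ∧
    ∀ k : ℕ, m + 1 ≤ k → k ≤ d - 1 → ∀ x : PreIdx n d,
      p x * winMarg p (k - m) k (fun i => x i.1) =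
        winMarg p 0 k (fun i => x i.1) * winMarg p (k - m) d (fun i => x i.1)

/-- Spectral norm (ℓ² → ℓ² operator norm) of a matrix. -/
noncomputable def specNorm {R C : Type*} [Fintype R] [Fintype C] [DecidableEq C]
    (M : Matrix R C ℝ) : ℝ :=
  ‖LinearMap.toContinuousLinearMap (Matrix.toEuclideanLin M)‖

/-- Moore–Penrose pseudoinverse of a full-column-rank matrix, `A⁺ = (AᵀA)⁻¹Aᵀ`. -/
noncomputable def pinv {m n : ℕ} (A : Matrix (Fin m) (Fin n) ℝ) :
    Matrix (Fin n) (Fin m) ℝ :=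
  (Aᵀ * A)⁻¹ * Aᵀ

/-- The norm `|||G|||`: max over the middle index of the spectral norm of the slices. -/
noncomputable def tnorm {a b c : ℕ} (G : Fin a → Fin b → Fin c → ℝ) : ℝ :=
  ⨆ i : Fin b, specNorm (Matrix.of fun x y => G x i y)

/-- Supremum norm of a 3-tensor. -/
noncomputable def supNorm3 {a b c : ℕ} (G : Fin a → Fin b → Fin c → ℝ) : ℝ :=
  ⨆ q : Fin a × Fin b × Fin c, |G q.1 q.2.1 q.2.2|

/-- Supremum norm of a `d`-dimensional tensor. -/
noncomputable def supNormF {n : ℕ → ℕ} {d : ℕ} (f : PreIdx n d → ℝ) : ℝ :=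
  ⨆ x : PreIdx n d, |f x|

namespace MCAux
variable {n : ℕ → ℕ} {d : ℕ}

def restr (a b : ℕ) (u : PreIdx n d) : MidIdx n d a b := fun i => u i.1

def winEquiv (a b : ℕ) :
    PreIdx n d ≃ MidIdx n d a b × (∀ i : {i : Fin d // (i : ℕ) < a ∨ b ≤ (i : ℕ)}, Fin (n i)) where
  toFun u := (fun i => u i.1, fun i => u i.1)
  invFun q := fun i =>
    if h : a ≤ (i : ℕ) ∧ (i : ℕ) < b then q.1 ⟨i, h⟩ else q.2 ⟨i, by omega⟩
  left_inv u := by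
    funext i
    by_cases h : a ≤ (i : ℕ) ∧ (i : ℕ) < b
    · exact dif_pos h
    · exact dif_neg h
  right_inv q := by
    refine Prod.ext ?_ ?_ <;> funext i
    · exact dif_pos i.2
    · have h : ¬(a ≤ ((i : Fin d) : ℕ) ∧ ((i : Fin d) : ℕ) < b) := by
        rcases i.2 with h | h <;> omega
      exact dif_neg h

lemma restr_winEquiv_symm (a b : ℕ) (y : MidIdx n d a b)
    (z : ∀ i : {i : Fin d // (i : ℕ) < a ∨ b ≤ (i : ℕ)}, Fin (n i)) :
    restr a b ((winEquiv a b).symm (y, z)) = y := by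
  funext i
  exact dif_pos i.2

lemma winMarg_rep (p : PreIdx n d → ℝ) (a b : ℕ) (y : MidIdx n d a b) :
    winMarg p a b y = ∑ u : PreIdx n d, if restr a b u = y then p u else 0 := by
  classical
  rw [← Equiv.sum_comp ((winEquiv (n := n) (d := d) a b).symm)
    (fun u => if restr a b u = y then p u else 0), Fintype.sum_prod_type]
  have : ∀ y' z, (if restr a b ((winEquiv (n := n) (d := d) a b).symm (y', z)) = y
      then p ((winEquiv a b).symm (y', z)) else 0)
      = (if y' = y then p ((winEquiv a b).symm (y', z)) else 0) := by
    intro y' z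
    rw [restr_winEquiv_symm]
  simp only [this]
  rw [Finset.sum_comm]
  simp only [Finset.sum_ite_eq', Finset.mem_univ, if_true]
  rfl

lemma restr_eq_iff (a b : ℕ) (u : PreIdx n d) (y : MidIdx n d a b) :
    restr a b u = y ↔ ∀ i : Fin d, ∀ h : a ≤ (i : ℕ) ∧ (i : ℕ) < b, u i = y ⟨i, h⟩ := by
  constructor
  · rintro rfl i h; rfl
  · intro h; funext i; exact h i.1 i.2

end MCAux

namespace MCAux
variable {n : ℕ → ℕ} {d : ℕ}

def winMatEquiv (a c b : ℕ) (hac : a ≤ c) (hcb : c ≤ b) :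
    PreIdx n d ≃ MidIdx n d a c × MidIdx n d c b ×
      (∀ i : {i : Fin d // (i : ℕ) < a ∨ b ≤ (i : ℕ)}, Fin (n i)) where
  toFun u := (fun i => u i.1, fun i => u i.1, fun i => u i.1)
  invFun q := fun i =>
    if h1 : a ≤ (i : ℕ) ∧ (i : ℕ) < c then q.1 ⟨i, h1⟩
    else if h2 : c ≤ (i : ℕ) ∧ (i : ℕ) < b then q.2.1 ⟨i, h2⟩
    else q.2.2 ⟨i, by omega⟩
  left_inv u := by
    funext i
    show dite _ _ _ = _
    by_cases h1 : a ≤ (i : ℕ) ∧ (i : ℕ) < c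
    · exact dif_pos h1
    · rw [dif_neg h1]
      by_cases h2 : c ≤ (i : ℕ) ∧ (i : ℕ) < b
      · exact dif_pos h2
      · exact dif_neg h2
  right_inv q := by
    refine Prod.ext ?_ (Prod.ext ?_ ?_) <;> funext i <;> show dite _ _ _ = _
    · exact dif_pos i.2
    · have h1 : ¬(a ≤ ((i : Fin d) : ℕ) ∧ ((i : Fin d) : ℕ) < c) := by
        have := i.2; omega
      rw [dif_neg h1]
      exact dif_pos i.2
    · have h1 : ¬(a ≤ ((i : Fin d) : ℕ) ∧ ((i : Fin d) : ℕ) < c) := by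
        rcases i.2 with h | h <;> omega
      have h2 : ¬(c ≤ ((i : Fin d) : ℕ) ∧ ((i : Fin d) : ℕ) < b) := by
        rcases i.2 with h | h <;> omega
      rw [dif_neg h1]
      exact dif_neg h2

lemma winMatrix_rep (p : PreIdx n d → ℝ) (a c b : ℕ) (hac : a ≤ c) (hcb : c ≤ b)
    (q : MidIdx n d a c) (y : MidIdx n d c b) :
    winMatrix p a c b q y =
      ∑ u : PreIdx n d, if restr a c u = q ∧ restr c b u = y then p u else 0 := by
  classical
  set E := winMatEquiv (n := n) (d := d) a c b hac hcb with hE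
  rw [← Equiv.sum_comp E.symm
    (fun u => if restr a c u = q ∧ restr c b u = y then p u else 0)]
  have key : ∀ (q' : MidIdx n d a c) (y' : MidIdx n d c b) z,
      (if restr a c (E.symm (q', y', z)) = q ∧ restr c b (E.symm (q', y', z)) = y
        then p (E.symm (q', y', z)) else 0)
      = (if q' = q ∧ y' = y then p (E.symm (q', y', z)) else 0) := by
    intro q' y' z
    have h1 : restr a c (E.symm (q', y', z)) = q' := by
      funext i
      exact dif_pos i.2
    have h2 : restr c b (E.symm (q', y', z)) = y' := by
      funext i
      have hn : ¬(a ≤ ((i : Fin d) : ℕ) ∧ ((i : Fin d) : ℕ) < c) := by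
        have := i.2; omega
      show dite _ _ _ = _
      rw [dif_neg hn]
      exact dif_pos i.2
    rw [h1, h2]
  simp only [Fintype.sum_prod_type, key]
  have inner : ∀ q' : MidIdx n d a c,
      (∑ y' : MidIdx n d c b, ∑ z, if q' = q ∧ y' = y then p (E.symm (q', y', z)) else 0)
      = if q' = q then (∑ z, p (E.symm (q, y, z))) else 0 := by
    intro q'
    by_cases hq : q' = q
    · subst hq
      rw [if_pos rfl, Finset.sum_comm]
      simp only [true_and]
      simp [Finset.sum_ite_eq', Finset.mem_univ]
    · simp [hq]
  rw [Finset.sum_congr rfl (fun q' _ => inner q')]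
  simp only [Finset.sum_ite_eq', Finset.mem_univ, if_true]
  exact Finset.sum_congr rfl (fun z _ => rfl)

end MCAux

namespace MCAux

section Specific
variable {n : ℕ → ℕ} {d t : ℕ}

/-- Triple marginal as an indicator sum. -/
noncomputable def P3 (hd : t + 3 ≤ d) (p : PreIdx n d → ℝ)
    (w : Fin (n t)) (x : Fin (n (t+1))) (y : Fin (n (t+2))) : ℝ :=
  ∑ u : PreIdx n d,
    if u ⟨t, by omega⟩ = w ∧ u ⟨t+1, by omega⟩ = x ∧ u ⟨t+2, by omega⟩ = y then p u else 0

noncomputable def P2a (hd : t + 3 ≤ d) (p : PreIdx n d → ℝ)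
    (w : Fin (n t)) (x : Fin (n (t+1))) : ℝ :=
  ∑ u : PreIdx n d, if u ⟨t, by omega⟩ = w ∧ u ⟨t+1, by omega⟩ = x then p u else 0

noncomputable def P2b (hd : t + 3 ≤ d) (p : PreIdx n d → ℝ)
    (x : Fin (n (t+1))) (y : Fin (n (t+2))) : ℝ :=
  ∑ u : PreIdx n d, if u ⟨t+1, by omega⟩ = x ∧ u ⟨t+2, by omega⟩ = y then p u else 0

noncomputable def p1v (hd : t + 3 ≤ d) (p : PreIdx n d → ℝ) (x : Fin (n (t+1))) : ℝ :=
  ∑ u : PreIdx n d, if u ⟨t+1, by omega⟩ = x then p u else 0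

lemma sum_P3_right (hd : t + 3 ≤ d) (p : PreIdx n d → ℝ) (w : Fin (n t))
    (x : Fin (n (t+1))) :
    ∑ y : Fin (n (t+2)), P3 hd p w x y = P2a hd p w x := by
  classical
  unfold P3 P2a
  rw [Finset.sum_comm]
  refine Finset.sum_congr rfl fun u _ => ?_
  by_cases h : u ⟨t, by omega⟩ = w ∧ u ⟨t+1, by omega⟩ = x
  · simp [h, and_assoc, ite_and, Finset.sum_ite_eq]
  · simp only [if_neg h]
    rw [Finset.sum_eq_zero]
    intro y _
    rw [if_neg]
    tauto

lemma sum_P2a (hd : t + 3 ≤ d) (p : PreIdx n d → ℝ) (x : Fin (n (t+1))) :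
    ∑ w : Fin (n t), P2a hd p w x = p1v hd p x := by
  classical
  unfold P2a p1v
  rw [Finset.sum_comm]
  refine Finset.sum_congr rfl fun u _ => ?_
  by_cases h : u ⟨t+1, by omega⟩ = x
  · simp [h, ite_and, and_comm, Finset.sum_ite_eq]
  · simp only [if_neg h]
    rw [Finset.sum_eq_zero]
    intro w _
    rw [if_neg]
    tauto

lemma P3_nonneg (hd : t + 3 ≤ d) (p : PreIdx n d → ℝ) (hp0 : ∀ u, 0 ≤ p u)
    (w : Fin (n t)) (x : Fin (n (t+1))) (y : Fin (n (t+2))) :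
    0 ≤ P3 hd p w x y := by
  refine Finset.sum_nonneg fun u _ => ?_
  split <;> simp [hp0]

lemma P3_eq_zero (hd : t + 3 ≤ d) (p : PreIdx n d → ℝ) (hp0 : ∀ u, 0 ≤ p u)
    (x : Fin (n (t+1))) (hx : p1v hd p x = 0)
    (w : Fin (n t)) (y : Fin (n (t+2))) :
    P3 hd p w x y = 0 := by
  classical
  have hsum : ∑ w' : Fin (n t), ∑ y' : Fin (n (t+2)), P3 hd p w' x y' = 0 := by
    simp only [sum_P3_right hd p, sum_P2a hd p, hx]
  have h2 := (Finset.sum_eq_zero_iff_of_nonneg (fun w' _ =>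
      Finset.sum_nonneg fun y' _ => P3_nonneg hd p hp0 w' x y')).mp hsum w (Finset.mem_univ w)
  exact (Finset.sum_eq_zero_iff_of_nonneg
      (fun y' _ => P3_nonneg hd p hp0 w x y')).mp h2 y (Finset.mem_univ y)

end Specific
end MCAux

namespace MCAux
section Specific2
variable {n : ℕ → ℕ} {d t : ℕ}

/-- Glue two full indices at position `t + 2`. -/
def gl2 (t : ℕ) (a b : PreIdx n d) : PreIdx n d :=
  fun i => if _ : (i : ℕ) < t + 2 then a i else b i

lemma restr_single_iff (hd : t + 3 ≤ d) (v u : PreIdx n d) :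
    restr (t+1) (t+2) v = restr (t+1) (t+2) u ↔
      v ⟨t+1, by omega⟩ = u ⟨t+1, by omega⟩ := by
  constructor
  · intro h
    exact congrFun h ⟨⟨t+1, by omega⟩, ⟨Nat.le_refl _, Nat.lt_succ_self _⟩⟩
  · intro h
    funext i
    show v i.1 = u i.1
    have hv : (i.1 : Fin d) = ⟨t+1, by omega⟩ :=
      Fin.ext (show ((i.1 : Fin d) : ℕ) = t + 1 by have := i.2; omega)
    rw [hv]
    exact h

lemma winMarg_single (hd : t + 3 ≤ d) (p : PreIdx n d → ℝ) (u : PreIdx n d) :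
    winMarg p (t+1) (t+2) (restr (t+1) (t+2) u) = p1v hd p (u ⟨t+1, by omega⟩) := by
  rw [winMarg_rep]
  exact Finset.sum_congr rfl fun v _ => if_congr (restr_single_iff hd v u) rfl rfl

lemma key_iff (hd : t + 3 ≤ d) (w : Fin (n t)) (x : Fin (n (t+1))) (y : Fin (n (t+2)))
    (a b u : PreIdx n d) :
    (restr 0 (t+2) a = restr 0 (t+2) u ∧ restr (t+1) d b = restr (t+1) d u ∧
      (u ⟨t, by omega⟩ = w ∧ u ⟨t+1, by omega⟩ = x ∧ u ⟨t+2, by omega⟩ = y)) ↔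
    ((a ⟨t, by omega⟩ = w ∧ a ⟨t+1, by omega⟩ = x) ∧
      (b ⟨t+1, by omega⟩ = x ∧ b ⟨t+2, by omega⟩ = y) ∧
      u = gl2 t a b) := by
  constructor
  · rintro ⟨h1, h2, hw, hx, hy⟩
    have e1 : ∀ i : Fin d, (i : ℕ) < t + 2 → a i = u i := fun i hi =>
      congrFun h1 ⟨i, ⟨Nat.zero_le _, hi⟩⟩
    have e2 : ∀ i : Fin d, t + 1 ≤ (i : ℕ) → b i = u i := fun i hi =>
      congrFun h2 ⟨i, ⟨hi, i.isLt⟩⟩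
    refine ⟨⟨?_, ?_⟩, ⟨?_, ?_⟩, ?_⟩
    · rw [e1 ⟨t, by omega⟩ (show t < t + 2 by omega)]; exact hw
    · rw [e1 ⟨t+1, by omega⟩ (show t + 1 < t + 2 by omega)]; exact hx
    · rw [e2 ⟨t+1, by omega⟩ (show t + 1 ≤ t + 1 by omega)]; exact hx
    · rw [e2 ⟨t+2, by omega⟩ (show t + 1 ≤ t + 2 by omega)]; exact hy
    · funext i
      show u i = dite _ _ _
      by_cases hi : (i : ℕ) < t + 2
      · rw [dif_pos hi]; exact (e1 i hi).symm
      · rw [dif_neg hi]; exact (e2 i (by omega)).symm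
  · rintro ⟨⟨ha1, ha2⟩, ⟨hb1, hb2⟩, rfl⟩
    refine ⟨?_, ?_, ?_, ?_, ?_⟩
    · funext i
      show a i.1 = dite _ _ _
      rw [dif_pos i.2.2]
    · funext i
      show b i.1 = dite _ _ _
      by_cases hjlt : ((i.1 : Fin d) : ℕ) < t + 2
      · rw [dif_pos hjlt]
        have hv : (i.1 : Fin d) = ⟨t+1, by omega⟩ :=
          Fin.ext (show ((i.1 : Fin d) : ℕ) = t + 1 by have := i.2; omega)
        rw [hv]
        exact hb1.trans ha2.symm
      · rw [dif_neg hjlt]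
    · show dite _ _ _ = _
      rw [dif_pos (show t < t + 2 by omega)]; exact ha1
    · show dite _ _ _ = _
      rw [dif_pos (show t + 1 < t + 2 by omega)]; exact ha2
    · show dite _ _ _ = _
      rw [dif_neg (show ¬ (t + 2 < t + 2) by omega)]; exact hb2

lemma markov_P3 (hd : t + 3 ≤ d) (p : PreIdx n d → ℝ) (hp : IsMarkov p)
    (hk : t + 2 ≤ d - 1) (w : Fin (n t)) (x : Fin (n (t+1))) (y : Fin (n (t+2))) :
    P3 hd p w x y * p1v hd p x = P2a hd p w x * P2b hd p x y := by
  classical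
  have hM : ∀ u : PreIdx n d,
      p u * p1v hd p (u ⟨t+1, by omega⟩) =
        winMarg p 0 (t+2) (restr 0 (t+2) u) * winMarg p (t+1) d (restr (t+1) d u) := by
    intro u
    rw [← winMarg_single hd p u]
    exact hp.2.2 (t+2) (by omega) hk u
  have hF : ∀ u : PreIdx n d, winMarg p 0 (t+2) (restr 0 (t+2) u) =
      ∑ a : PreIdx n d, if restr 0 (t+2) a = restr 0 (t+2) u then p a else 0 :=
    fun u => winMarg_rep p 0 (t+2) _
  have hG : ∀ u : PreIdx n d, winMarg p (t+1) d (restr (t+1) d u) =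
      ∑ b : PreIdx n d, if restr (t+1) d b = restr (t+1) d u then p b else 0 :=
    fun u => winMarg_rep p (t+1) d _
  calc P3 hd p w x y * p1v hd p x
      = ∑ u : PreIdx n d,
          (if u ⟨t, by omega⟩ = w ∧ u ⟨t+1, by omega⟩ = x ∧ u ⟨t+2, by omega⟩ = y
            then p u * p1v hd p (u ⟨t+1, by omega⟩) else 0) := by
        unfold P3
        rw [Finset.sum_mul]
        refine Finset.sum_congr rfl fun u _ => ?_
        by_cases h : u ⟨t, by omega⟩ = w ∧ u ⟨t+1, by omega⟩ = x ∧ u ⟨t+2, by omega⟩ = y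
        · rw [if_pos h, if_pos h, h.2.1]
        · rw [if_neg h, if_neg h, zero_mul]
    _ = ∑ u : PreIdx n d, ∑ a : PreIdx n d, ∑ b : PreIdx n d,
          (if (restr 0 (t+2) a = restr 0 (t+2) u ∧ restr (t+1) d b = restr (t+1) d u ∧
              (u ⟨t, by omega⟩ = w ∧ u ⟨t+1, by omega⟩ = x ∧ u ⟨t+2, by omega⟩ = y))
            then p a * p b else 0) := by
        refine Finset.sum_congr rfl fun u _ => ?_
        by_cases h : u ⟨t, by omega⟩ = w ∧ u ⟨t+1, by omega⟩ = x ∧ u ⟨t+2, by omega⟩ = y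
        · rw [if_pos h, hM u, hF u, hG u, Finset.sum_mul_sum]
          refine Finset.sum_congr rfl fun a _ => Finset.sum_congr rfl fun b _ => ?_
          by_cases h1 : restr 0 (t+2) a = restr 0 (t+2) u <;>
            by_cases h2 : restr (t+1) d b = restr (t+1) d u <;>
            simp [h, h1, h2]
        · rw [if_neg h, eq_comm]
          refine Finset.sum_eq_zero fun a _ => Finset.sum_eq_zero fun b _ => ?_
          rw [if_neg]
          tauto
    _ = ∑ a : PreIdx n d, ∑ b : PreIdx n d, ∑ u : PreIdx n d,
          (if (restr 0 (t+2) a = restr 0 (t+2) u ∧ restr (t+1) d b = restr (t+1) d u ∧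
              (u ⟨t, by omega⟩ = w ∧ u ⟨t+1, by omega⟩ = x ∧ u ⟨t+2, by omega⟩ = y))
            then p a * p b else 0) := by
        rw [Finset.sum_comm]
        exact Finset.sum_congr rfl fun a _ => Finset.sum_comm
    _ = ∑ a : PreIdx n d, ∑ b : PreIdx n d,
          (if ((a ⟨t, by omega⟩ = w ∧ a ⟨t+1, by omega⟩ = x) ∧
              (b ⟨t+1, by omega⟩ = x ∧ b ⟨t+2, by omega⟩ = y))
            then p a * p b else 0) := by
        refine Finset.sum_congr rfl fun a _ => Finset.sum_congr rfl fun b _ => ?_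
        rw [Finset.sum_congr rfl fun u _ => if_congr (key_iff hd w x y a b u) rfl rfl]
        by_cases hC : (a ⟨t, by omega⟩ = w ∧ a ⟨t+1, by omega⟩ = x) ∧
            (b ⟨t+1, by omega⟩ = x ∧ b ⟨t+2, by omega⟩ = y)
        · rw [if_pos hC]
          have heach : ∀ u : PreIdx n d,
              (if ((a ⟨t, by omega⟩ = w ∧ a ⟨t+1, by omega⟩ = x) ∧
                  (b ⟨t+1, by omega⟩ = x ∧ b ⟨t+2, by omega⟩ = y) ∧ u = gl2 t a b)
                then p a * p b else 0)
              = (if u = gl2 t a b then p a * p b else 0) := by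
            intro u
            by_cases hu : u = gl2 t a b
            · rw [if_pos ⟨hC.1, hC.2, hu⟩, if_pos hu]
            · rw [if_neg (by tauto), if_neg hu]
          rw [Finset.sum_congr rfl fun u _ => heach u,
            Finset.sum_ite_eq' Finset.univ (gl2 t a b) (fun _ => p a * p b),
            if_pos (Finset.mem_univ _)]
        · rw [if_neg hC]
          refine Finset.sum_eq_zero fun u _ => ?_
          rw [if_neg]
          tauto
    _ = P2a hd p w x * P2b hd p x y := by
        unfold P2a P2b
        rw [Finset.sum_mul_sum]
        refine Finset.sum_congr rfl fun a _ => Finset.sum_congr rfl fun b _ => ?_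
        by_cases h1 : a ⟨t, by omega⟩ = w ∧ a ⟨t+1, by omega⟩ = x <;>
          by_cases h2 : b ⟨t+1, by omega⟩ = x ∧ b ⟨t+2, by omega⟩ = y <;>
          simp [h1, h2]

end Specific2
end MCAux

namespace MCAux
section Specific3
variable {n : ℕ → ℕ} {d t : ℕ}

noncomputable def cc (hd : t + 3 ≤ d) (p : PreIdx n d → ℝ)
    (w : Fin (n t)) (x : Fin (n (t+1))) : ℝ :=
  if p1v hd p x = 0 then 0 else P2a hd p w x / p1v hd p x

lemma P3_eq (hd : t + 3 ≤ d) (p : PreIdx n d → ℝ) (hp : IsMarkov p)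
    (hk : t + 2 ≤ d - 1) (w : Fin (n t)) (x : Fin (n (t+1))) (y : Fin (n (t+2))) :
    P3 hd p w x y = cc hd p w x * ∑ w' : Fin (n t), P3 hd p w' x y := by
  by_cases h : p1v hd p x = 0
  · rw [P3_eq_zero hd p hp.1 x h w y]
    unfold cc
    rw [if_pos h, zero_mul]
  · have hS : (∑ w' : Fin (n t), P3 hd p w' x y) = P2b hd p x y := by
      have h1 : (∑ w' : Fin (n t), P3 hd p w' x y) * p1v hd p x =
          P2b hd p x y * p1v hd p x := by
        rw [Finset.sum_mul]
        calc ∑ w' : Fin (n t), P3 hd p w' x y * p1v hd p x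
            = ∑ w' : Fin (n t), P2a hd p w' x * P2b hd p x y :=
              Finset.sum_congr rfl fun w' _ => markov_P3 hd p hp hk w' x y
          _ = (∑ w' : Fin (n t), P2a hd p w' x) * P2b hd p x y := by
              rw [Finset.sum_mul]
          _ = P2b hd p x y * p1v hd p x := by rw [sum_P2a hd p x, mul_comm]
      exact mul_right_cancel₀ h h1
    rw [hS]
    unfold cc
    rw [if_neg h, div_mul_eq_mul_div, eq_div_iff h]
    exact markov_P3 hd p hp hk w x y

/-- The pair index built from two coordinates. -/
def mk2a (hd : t + 3 ≤ d) (w : Fin (n t)) (x : Fin (n (t+1))) : MidIdx n d t (t+2) :=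
  fun i => if h : ((i.1 : Fin d) : ℕ) = t then Fin.cast (congrArg n h.symm) w
    else Fin.cast (congrArg n (show t + 1 = ((i.1 : Fin d) : ℕ) by have := i.2; omega)) x

lemma mk2a_A (hd : t + 3 ≤ d) (w : Fin (n t)) (x : Fin (n (t+1))) :
    mk2a hd w x ⟨⟨t, by omega⟩, ⟨le_rfl, (by omega : t < t + 2)⟩⟩ = w :=
  (dif_pos rfl).trans (Fin.ext rfl)

lemma mk2a_B (hd : t + 3 ≤ d) (w : Fin (n t)) (x : Fin (n (t+1))) :
    mk2a hd w x ⟨⟨t+1, by omega⟩, ⟨(by omega : t ≤ t + 1), (by omega : t + 1 < t + 2)⟩⟩ = x :=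
  (dif_neg (show ¬ (t + 1 = t) by omega)).trans (Fin.ext rfl)

lemma winMatrix_eq (hd : t + 3 ≤ d) (p : PreIdx n d → ℝ)
    (q : MidIdx n d t (t+2)) (y : MidIdx n d (t+2) (t+3)) :
    winMatrix p t (t+2) (t+3) q y =
      P3 hd p (q ⟨⟨t, by omega⟩, ⟨le_rfl, (by omega : t < t + 2)⟩⟩)
        (q ⟨⟨t+1, by omega⟩, ⟨(by omega : t ≤ t + 1), (by omega : t + 1 < t + 2)⟩⟩)
        (y ⟨⟨t+2, by omega⟩, ⟨(by omega : t + 2 ≤ t + 2), (by omega : t + 2 < t + 3)⟩⟩) := by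
  classical
  rw [winMatrix_rep p t (t+2) (t+3) (by omega) (by omega) q y]
  unfold P3
  refine Finset.sum_congr rfl fun u _ => if_congr ?_ rfl rfl
  constructor
  · rintro ⟨h1, h2⟩
    exact ⟨congrFun h1 ⟨⟨t, by omega⟩, ⟨le_rfl, (by omega : t < t + 2)⟩⟩,
      congrFun h1 ⟨⟨t+1, by omega⟩, ⟨(by omega : t ≤ t + 1), (by omega : t + 1 < t + 2)⟩⟩,
      congrFun h2 ⟨⟨t+2, by omega⟩, ⟨(by omega : t + 2 ≤ t + 2), (by omega : t + 2 < t + 3)⟩⟩⟩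
  · rintro ⟨h1, h2, h3⟩
    constructor
    · funext i
      show u i.1 = q i
      by_cases hc : ((i.1 : Fin d) : ℕ) = t
      · have hi : i = ⟨⟨t, by omega⟩, ⟨le_rfl, (by omega : t < t + 2)⟩⟩ := Subtype.ext (Fin.ext hc)
        rw [hi]; exact h1
      · have hi : i = ⟨⟨t+1, by omega⟩, ⟨(by omega : t ≤ t + 1), (by omega : t + 1 < t + 2)⟩⟩ :=
          Subtype.ext (Fin.ext (show ((i.1 : Fin d) : ℕ) = t + 1 by have := i.2; omega))
        rw [hi]; exact h2
    · funext i
      show u i.1 = y i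
      have hi : i = ⟨⟨t+2, by omega⟩, ⟨(by omega : t + 2 ≤ t + 2), (by omega : t + 2 < t + 3)⟩⟩ :=
        Subtype.ext (Fin.ext (show ((i.1 : Fin d) : ℕ) = t + 2 by have := i.2; omega))
      rw [hi]; exact h3

lemma winMatrix_Q (hd : t + 3 ≤ d) (p : PreIdx n d → ℝ) (hp : IsMarkov p)
    (hk : t + 2 ≤ d - 1) (q : MidIdx n d t (t+2)) (y : MidIdx n d (t+2) (t+3)) :
    winMatrix p t (t+2) (t+3) q y =
      cc hd p (q ⟨⟨t, by omega⟩, ⟨le_rfl, (by omega : t < t + 2)⟩⟩)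
          (q ⟨⟨t+1, by omega⟩, ⟨(by omega : t ≤ t + 1), (by omega : t + 1 < t + 2)⟩⟩) *
        ∑ w : Fin (n t),
          winMatrix p t (t+2) (t+3)
            (mk2a hd w (q ⟨⟨t+1, by omega⟩, ⟨(by omega : t ≤ t + 1), (by omega : t + 1 < t + 2)⟩⟩)) y := by
  rw [winMatrix_eq hd p q y]
  have hall : ∀ w : Fin (n t),
      winMatrix p t (t+2) (t+3)
          (mk2a hd w (q ⟨⟨t+1, by omega⟩, ⟨(by omega : t ≤ t + 1), (by omega : t + 1 < t + 2)⟩⟩)) y =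
        P3 hd p w (q ⟨⟨t+1, by omega⟩, ⟨(by omega : t ≤ t + 1), (by omega : t + 1 < t + 2)⟩⟩)
          (y ⟨⟨t+2, by omega⟩, ⟨(by omega : t + 2 ≤ t + 2), (by omega : t + 2 < t + 3)⟩⟩) := by
    intro w
    rw [winMatrix_eq hd p _ y, mk2a_A, mk2a_B]
  rw [Finset.sum_congr rfl fun w _ => hall w]
  exact P3_eq hd p hp hk _ _ _

end Specific3
end MCAux

set_option maxHeartbeats 1000000 in
/-- the coefficient matrix `A_k` has full rank for Markov models.
Let `p` be a discrete Markov model and `2 ≤ k ≤ d - 1` (1-based, here `k = t + 2`) such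
that the `k`-th unfolding matrix of `p` has rank `r_k`.  If `B_k` has orthonormal
columns spanning the column space of the triple-marginal matrix
`p((x_{k-1}, x_k); x_{k+1})`, then `A_k(x_k, α_k) = Σ_{x_{k-1}} B_k(x_{k-1}, x_k, α_k)`
has rank `r_k`. -/
theorem markov_coefficient_matrix_full_rank
    (d : ℕ) (n rk : ℕ → ℕ) (p : PreIdx n d → ℝ) (hp : IsMarkov p)
    (t : ℕ) (hk : t + 2 ≤ d - 1)
    (hrank : mrank (unfold p (t + 2)) = rk (t + 2))
    (B : Fin (n t) → Fin (n (t + 1)) → Fin (rk (t + 2)) → ℝ)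
    (hBortho :
      (Matrix.of fun (q : Fin (n t) × Fin (n (t + 1))) (α : Fin (rk (t + 2))) =>
          B q.1 q.2 α)ᵀ *
        (Matrix.of fun (q : Fin (n t) × Fin (n (t + 1))) (α : Fin (rk (t + 2))) =>
          B q.1 q.2 α) = 1)
    (hBspan :
      colSpace (Matrix.of fun (q : MidIdx n d t (t + 2)) (α : Fin (rk (t + 2))) =>
          B (q ⟨⟨t, by omega⟩, ⟨le_rfl, Nat.lt_succ_of_lt (Nat.lt_succ_self _)⟩⟩)
            (q ⟨⟨t + 1, by omega⟩, ⟨Nat.le_succ _, Nat.lt_succ_self _⟩⟩) α) =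
        colSpace (winMatrix p t (t + 2) (t + 3))) :
    mrank (Matrix.of fun (x : Fin (n (t + 1))) (α : Fin (rk (t + 2))) =>
        ∑ w : Fin (n t), B w x α) = rk (t + 2) := by
  classical
  have hd : t + 3 ≤ d := by omega
  let S : ((MidIdx n d t (t + 2)) → ℝ) →ₗ[ℝ] ((Fin (n (t + 1))) → ℝ) :=
    { toFun := fun v x => ∑ w : Fin (n t), v (MCAux.mk2a hd w x)
      map_add' := fun v v' => by
        funext x
        exact Finset.sum_add_distrib
      map_smul' := fun c v => by
        funext x
        simp [Finset.mul_sum] }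
  let Bm : Matrix (MidIdx n d t (t + 2)) (Fin (rk (t + 2))) ℝ :=
    Matrix.of fun q α =>
      B (q ⟨⟨t, by omega⟩, ⟨le_rfl, (by omega : t < t + 2)⟩⟩)
        (q ⟨⟨t+1, by omega⟩, ⟨(by omega : t ≤ t + 1), (by omega : t + 1 < t + 2)⟩⟩) α
  have hBspan' : colSpace Bm = colSpace (winMatrix p t (t + 2) (t + 3)) := hBspan
  -- every element of the column space of the marginal matrix satisfies the
  -- proportionality property
  have hQ : ∀ v ∈ colSpace (winMatrix p t (t + 2) (t + 3)), ∀ q : MidIdx n d t (t + 2),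
      v q = MCAux.cc hd p (q ⟨⟨t, by omega⟩, ⟨le_rfl, (by omega : t < t + 2)⟩⟩)
          (q ⟨⟨t+1, by omega⟩, ⟨(by omega : t ≤ t + 1), (by omega : t + 1 < t + 2)⟩⟩) *
        ∑ w : Fin (n t), v (MCAux.mk2a hd w
          (q ⟨⟨t+1, by omega⟩, ⟨(by omega : t ≤ t + 1), (by omega : t + 1 < t + 2)⟩⟩)) := by
    intro v hv
    have hv' : v ∈ Submodule.span ℝ (Set.range fun (c : MidIdx n d (t+2) (t+3))
        (r : MidIdx n d t (t+2)) => winMatrix p t (t+2) (t+3) r c) := hv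
    induction hv' using Submodule.span_induction with
    | mem v hvm =>
        obtain ⟨y, rfl⟩ := hvm
        intro q
        exact MCAux.winMatrix_Q hd p hp hk q y
    | zero => intro q; simp
    | add v v' hv1 hv2 ih ih' =>
        intro q
        simp only [Pi.add_apply]
        rw [ih hv1 q, ih' hv2 q, ← mul_add, ← Finset.sum_add_distrib]
    | smul c v hv1 ih =>
        intro q
        simp only [Pi.smul_apply, smul_eq_mul]
        rw [ih hv1 q, ← Finset.mul_sum]
        ring
  have hinj : ∀ v ∈ colSpace Bm, S v = 0 → v = 0 := by
    intro v hv h0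
    funext q
    have h1 := hQ v (hBspan' ▸ hv) q
    have h2 : (∑ w : Fin (n t), v (MCAux.mk2a hd w
        (q ⟨⟨t+1, by omega⟩, ⟨(by omega : t ≤ t + 1), (by omega : t + 1 < t + 2)⟩⟩))) = 0 :=
      congrFun h0 (q ⟨⟨t+1, by omega⟩, ⟨(by omega : t ≤ t + 1), (by omega : t + 1 < t + 2)⟩⟩)
    rw [h1, h2, mul_zero]
    rfl
  have hker : LinearMap.ker (S.domRestrict (colSpace Bm)) = ⊥ := by
    rw [LinearMap.ker_eq_bot']
    rintro ⟨v, hv⟩ h0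
    exact Subtype.ext (hinj v hv h0)
  have hfin : Module.finrank ℝ (Submodule.map S (colSpace Bm)) =
      Module.finrank ℝ (colSpace Bm) := by
    have h1 := LinearMap.finrank_range_of_inj (LinearMap.ker_eq_bot.mp hker)
    rwa [LinearMap.range_domRestrict] at h1
  have hco : (⇑S ∘ fun (c : Fin (rk (t + 2))) (r : MidIdx n d t (t + 2)) => Bm r c) =
      fun (c : Fin (rk (t + 2))) (x : Fin (n (t + 1))) => ∑ w : Fin (n t), B w x c := by
    funext c x
    show (∑ w : Fin (n t), Bm (MCAux.mk2a hd w x) c) = _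
    refine Finset.sum_congr rfl fun w _ => ?_
    show B (MCAux.mk2a hd w x ⟨⟨t, by omega⟩, ⟨le_rfl, (by omega : t < t + 2)⟩⟩)
        (MCAux.mk2a hd w x
          ⟨⟨t+1, by omega⟩, ⟨(by omega : t ≤ t + 1), (by omega : t + 1 < t + 2)⟩⟩) c
      = B w x c
    rw [MCAux.mk2a_A, MCAux.mk2a_B]
  have hcolA : colSpace (Matrix.of fun (x : Fin (n (t + 1))) (α : Fin (rk (t + 2))) =>
      ∑ w : Fin (n t), B w x α) = Submodule.map S (colSpace Bm) := by
    unfold colSpace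
    rw [Submodule.map_span, ← Set.range_comp, hco]
    rfl
  have hli : LinearIndependent ℝ
      (fun (α : Fin (rk (t + 2))) (q : MidIdx n d t (t + 2)) => Bm q α) := by
    rw [Fintype.linearIndependent_iff]
    intro g hg β
    have hg' : ∀ (w : Fin (n t)) (x : Fin (n (t + 1))),
        (∑ α, g α * B w x α) = 0 := by
      intro w x
      have h := congrFun hg (MCAux.mk2a hd w x)
      rw [Finset.sum_apply] at h
      simpa [Bm, MCAux.mk2a_A, MCAux.mk2a_B] using h
    have h2 : ∀ α, (∑ q : Fin (n t) × Fin (n (t + 1)), B q.1 q.2 β * B q.1 q.2 α) =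
        if β = α then (1 : ℝ) else 0 := by
      intro α
      have h := congrFun (congrFun hBortho β) α
      simpa [Matrix.mul_apply, Matrix.transpose_apply, Matrix.one_apply] using h
    calc g β = ∑ α, (if β = α then (1 : ℝ) else 0) * g α := by
          symm
          simp [ite_mul, Finset.sum_ite_eq]
      _ = ∑ α, (∑ q : Fin (n t) × Fin (n (t + 1)), B q.1 q.2 β * B q.1 q.2 α) * g α := by
          refine Finset.sum_congr rfl fun α _ => ?_
          rw [h2 α]
      _ = ∑ q : Fin (n t) × Fin (n (t + 1)), B q.1 q.2 β * (∑ α, g α * B q.1 q.2 α) := by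
          simp only [Finset.sum_mul, Finset.mul_sum]
          rw [Finset.sum_comm]
          exact Finset.sum_congr rfl fun q _ => Finset.sum_congr rfl fun α _ => by ring
      _ = 0 := by simp [hg']
  have hfin2 : Module.finrank ℝ (colSpace Bm) = rk (t + 2) := by
    have h := finrank_span_eq_card hli
    rw [Fintype.card_fin] at h
    exact h
  unfold mrank
  rw [hcolA, hfin, hfin2]
end

section
/- Let A ∈ ℝ^{m×n} with rank(A) = n ≤ m, and let ΔA ∈ ℝ^{m×n} be a perturbation with ‖A⁺‖·‖ΔA‖ < 1, where A⁺ = (AᵀA)⁻¹Aᵀ. Then rank(A+ΔA) = n. Moreover, let B ∈ ℝ^{m×ℓ_1×ℓ_2} and ΔB ∈ ℝ^{m×ℓ_1×ℓ_2}, and let X ∈ ℝ^{n×ℓ_1×ℓ_2} and X+ΔX ∈ ℝ^{n×ℓ_1×ℓ_2} be the least-squares solutions of the tensor equations A∘X = B and (A+ΔA)∘X = B+ΔB respectively (i.e., for each (i_1,i_2), X(·,i_1,i_2) = A⁺B(·,i_1,i_2) and (X+ΔX)(·,i_1,i_2) = (A+ΔA)⁺(B+ΔB)(·,i_1,i_2)).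 If for every (i_1,i_2) the vector B(·,i_1,i_2) lies in the column space of A, then |||ΔX||| ≤ (√(2 m ℓ_2)·‖A⁺‖)/(1 − ‖A⁺‖·‖ΔA‖) · (‖ΔA‖·|||X||| + ‖ΔB‖_∞). In particular, if |||X||| ≥ χ > 0 for some constant χ and ‖A⁺‖·‖ΔA‖ ≤ 1/2, then |||ΔX|||/|||X||| ≤ √(8 m ℓ_2)·‖A⁺‖·(‖ΔA‖ + ‖ΔB‖_∞·χ⁻¹). -/
open scoped BigOperators
open Matrix

/-! ### Auxiliary lemmas for the perturbation theorem -/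

section PerturbHelpers

open scoped Matrix.Norms.L2Operator

/-- Euclidean norm of a plain vector. -/
noncomputable def vnorm {k : ℕ} (v : Fin k → ℝ) : ℝ :=
  ‖(WithLp.equiv 2 (Fin k → ℝ)).symm v‖

lemma vnorm_eq {k : ℕ} (v : Fin k → ℝ) :
    vnorm v = Real.sqrt (∑ i, v i ^ 2) := by
  rw [vnorm, EuclideanSpace.norm_eq]
  congr 1
  refine Finset.sum_congr rfl fun i _ => ?_
  simp [Real.norm_eq_abs, sq_abs]

lemma vnorm_nonneg {k : ℕ} (v : Fin k → ℝ) : 0 ≤ vnorm v := norm_nonneg _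

lemma vnorm_eq_zero {k : ℕ} {v : Fin k → ℝ} (h : vnorm v = 0) : v = 0 := by
  have h2 : (WithLp.equiv 2 (Fin k → ℝ)).symm v = 0 := norm_eq_zero.mp h
  have := congrArg (WithLp.equiv 2 (Fin k → ℝ)) h2
  simpa using this

lemma vnorm_neg {k : ℕ} (v : Fin k → ℝ) : vnorm (-v) = vnorm v := by
  rw [vnorm_eq, vnorm_eq]; simp

lemma vnorm_add_le {k : ℕ} (v w : Fin k → ℝ) : vnorm (v + w) ≤ vnorm v + vnorm w := by
  simp only [vnorm]
  rw [show (WithLp.equiv 2 (Fin k → ℝ)).symm (v + w)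
      = (WithLp.equiv 2 (Fin k → ℝ)).symm v + (WithLp.equiv 2 (Fin k → ℝ)).symm w from rfl]
  exact norm_add_le _ _

lemma vnorm_sub_le {k : ℕ} (v w : Fin k → ℝ) : vnorm (v - w) ≤ vnorm v + vnorm w := by
  have := vnorm_add_le v (-w)
  rwa [vnorm_neg, show v + -w = v - w by ring] at this

lemma specNorm_eq {a b : ℕ} (M : Matrix (Fin a) (Fin b) ℝ) : specNorm M = ‖M‖ := rfl

lemma specNorm_nonneg {a b : ℕ} (M : Matrix (Fin a) (Fin b) ℝ) : 0 ≤ specNorm M := by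
  rw [specNorm_eq]; exact norm_nonneg _

lemma vnorm_mulVec_le {a b : ℕ} (M : Matrix (Fin a) (Fin b) ℝ) (v : Fin b → ℝ) :
    vnorm (M *ᵥ v) ≤ specNorm M * vnorm v := by
  have h := M.l2_opNorm_mulVec ((WithLp.equiv 2 (Fin b → ℝ)).symm v)
  simpa [vnorm, specNorm_eq] using h

lemma specNorm_mul_le {a b c : ℕ} (M : Matrix (Fin a) (Fin b) ℝ)
    (N : Matrix (Fin b) (Fin c) ℝ) :
    specNorm (M * N) ≤ specNorm M * specNorm N := by
  simpa [specNorm_eq] using Matrix.l2_opNorm_mul M N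

lemma specNorm_le_bound {a b : ℕ} (M : Matrix (Fin a) (Fin b) ℝ) {K : ℝ} (hK : 0 ≤ K)
    (h : ∀ v : Fin b → ℝ, vnorm (M *ᵥ v) ≤ K * vnorm v) : specNorm M ≤ K := by
  rw [specNorm_eq, Matrix.l2_opNorm_def]
  refine ContinuousLinearMap.opNorm_le_bound _ hK fun x => ?_
  simpa [vnorm, Matrix.toEuclideanLin_apply] using h (WithLp.equiv 2 (Fin b → ℝ) x)

lemma dot_le_enorm_mul {k : ℕ} (v w : Fin k → ℝ) : v ⬝ᵥ w ≤ vnorm v * vnorm w := by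
  have h := real_inner_le_norm ((WithLp.equiv 2 (Fin k → ℝ)).symm v)
    ((WithLp.equiv 2 (Fin k → ℝ)).symm w)
  have h2 : (inner ℝ ((WithLp.equiv 2 (Fin k → ℝ)).symm v)
      ((WithLp.equiv 2 (Fin k → ℝ)).symm w) : ℝ) = v ⬝ᵥ w := by
    simp [PiLp.inner_apply, dotProduct, RCLike.inner_apply, mul_comm]
  rw [h2] at h
  exact h

lemma vnorm_sq {k : ℕ} (v : Fin k → ℝ) : vnorm v ^ 2 = v ⬝ᵥ v := by
  rw [vnorm_eq, Real.sq_sqrt (by positivity)]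
  simp [dotProduct, sq]

lemma dot_transpose {a b : ℕ} (M : Matrix (Fin a) (Fin b) ℝ) (v : Fin b → ℝ)
    (w : Fin a → ℝ) : v ⬝ᵥ (Mᵀ *ᵥ w) = (M *ᵥ v) ⬝ᵥ w := by
  rw [Matrix.dotProduct_mulVec, Matrix.vecMul_transpose]

lemma mulVec_inj_of_rank {a b : ℕ} {A : Matrix (Fin a) (Fin b) ℝ} (hA : A.rank = b) :
    ∀ v, A *ᵥ v = 0 → v = 0 := by
  intro v hv
  have hker : LinearMap.ker A.mulVecLin = ⊥ := by
    have h2 := LinearMap.finrank_range_add_finrank_ker A.mulVecLin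
    have h3 : Module.finrank ℝ (Fin b → ℝ) = b := by simp
    rw [h3] at h2
    have h4 : Module.finrank ℝ (LinearMap.range A.mulVecLin) = b := hA
    rw [h4] at h2
    have h5 : Module.finrank ℝ (LinearMap.ker A.mulVecLin) = 0 := by omega
    exact Submodule.finrank_eq_zero.mp h5
  have : v ∈ LinearMap.ker A.mulVecLin := by
    simpa [LinearMap.mem_ker, Matrix.mulVecLin_apply] using hv
  rwa [hker, Submodule.mem_bot] at this

lemma rank_of_inj {a b : ℕ} {A : Matrix (Fin a) (Fin b) ℝ}
    (h : ∀ v, A *ᵥ v = 0 → v = 0) : A.rank = b := by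
  have hinj : Function.Injective A.mulVecLin := by
    rw [← LinearMap.ker_eq_bot]
    refine (Submodule.eq_bot_iff _).mpr fun v hv => ?_
    exact h v (by simpa [LinearMap.mem_ker, Matrix.mulVecLin_apply] using hv)
  rw [Matrix.rank, LinearMap.finrank_range_of_inj hinj]
  simp

lemma gram_inv_mul {a b : ℕ} (A : Matrix (Fin a) (Fin b) ℝ)
    (h : ∀ v, A *ᵥ v = 0 → v = 0) : (Aᵀ * A)⁻¹ * (Aᵀ * A) = 1 := by
  refine Matrix.nonsing_inv_mul _ ?_
  rw [isUnit_iff_ne_zero]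
  intro hdet
  obtain ⟨v, hv, hveq⟩ := (Matrix.exists_mulVec_eq_zero_iff).mpr hdet
  apply hv
  refine h v ?_
  have h1 : v ⬝ᵥ ((Aᵀ * A) *ᵥ v) = (A *ᵥ v) ⬝ᵥ (A *ᵥ v) := by
    rw [← Matrix.mulVec_mulVec, dot_transpose]
  rw [hveq] at h1
  simp only [dotProduct_zero] at h1
  exact dotProduct_self_eq_zero.mp h1.symm

lemma pinv_mul_self {a b : ℕ} (A : Matrix (Fin a) (Fin b) ℝ)
    (h : ∀ v, A *ᵥ v = 0 → v = 0) : pinv A * A = 1 := by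
  rw [pinv, Matrix.mul_assoc]
  exact gram_inv_mul A h

lemma proj_specNorm_le {a b : ℕ} (Ah : Matrix (Fin a) (Fin b) ℝ)
    (h : ∀ v, Ah *ᵥ v = 0 → v = 0) : specNorm (Ah * pinv Ah) ≤ 1 := by
  have hg : (Ahᵀ * Ah)⁻¹ * (Ahᵀ * Ah) = 1 := gram_inv_mul Ah h
  have hq : pinv Ah * Ah = 1 := pinv_mul_self Ah h
  set P := Ah * pinv Ah with hP
  have hGsym : (Ahᵀ * Ah)ᵀ = Ahᵀ * Ah := by
    rw [Matrix.transpose_mul, Matrix.transpose_transpose]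
  have hsym : Pᵀ = P := by
    rw [hP, pinv, Matrix.transpose_mul, Matrix.transpose_mul, Matrix.transpose_transpose,
      Matrix.transpose_nonsing_inv, hGsym, Matrix.mul_assoc]
  have hPP : P * P = P := by
    calc P * P = Ah * ((pinv Ah * Ah) * pinv Ah) := by
          simp only [hP, Matrix.mul_assoc]
      _ = P := by rw [hq, Matrix.one_mul]
  refine specNorm_le_bound _ zero_le_one fun v => ?_
  set w := P *ᵥ v with hw
  have h1 : w ⬝ᵥ w = v ⬝ᵥ w := by
    have h2 : v ⬝ᵥ (Pᵀ *ᵥ w) = w ⬝ᵥ w := dot_transpose P v w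
    rw [hsym] at h2
    have h3 : P *ᵥ w = w := by
      rw [hw, Matrix.mulVec_mulVec, hPP]
    rw [h3] at h2
    exact h2.symm
  have h4 : vnorm w ^ 2 ≤ vnorm v * vnorm w := by
    rw [vnorm_sq, h1]
    exact dot_le_enorm_mul v w
  rcases (vnorm_nonneg w).lt_or_eq with h0 | h0
  · have h5 : vnorm w ≤ vnorm v := by nlinarith
    rw [one_mul]
    exact h5
  · rw [one_mul, ← h0]
    exact vnorm_nonneg v

lemma tnorm_nonneg {a b c : ℕ} (G : Fin a → Fin b → Fin c → ℝ) : 0 ≤ tnorm G :=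
  Real.iSup_nonneg fun i => specNorm_nonneg _

lemma supNorm3_nonneg {a b c : ℕ} (G : Fin a → Fin b → Fin c → ℝ) : 0 ≤ supNorm3 G :=
  Real.iSup_nonneg fun q => abs_nonneg _

lemma col_enorm_le_tnorm {n ℓ₁ ℓ₂ : ℕ} (X : Fin n → Fin ℓ₁ → Fin ℓ₂ → ℝ)
    (i₁ : Fin ℓ₁) (i₂ : Fin ℓ₂) :
    vnorm (fun c => X c i₁ i₂) ≤ tnorm X := by
  have h1 : (fun c => X c i₁ i₂)
      = (Matrix.of fun c j => X c i₁ j) *ᵥ Pi.single i₂ (1:ℝ) := by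
    funext c
    rw [Matrix.mulVec_single]
    simp
  have h2 : vnorm (Pi.single i₂ (1:ℝ)) = 1 := by
    rw [vnorm_eq]
    have : (∑ j, Pi.single i₂ (1:ℝ) j ^ 2) = (1:ℝ) := by
      rw [Finset.sum_eq_single i₂] <;> simp +contextual [Pi.single_apply]
    rw [this, Real.sqrt_one]
  calc vnorm (fun c => X c i₁ i₂)
      ≤ specNorm (Matrix.of fun c j => X c i₁ j) * vnorm (Pi.single i₂ (1:ℝ)) := by
        rw [h1]; exact vnorm_mulVec_le _ _
    _ = specNorm (Matrix.of fun c j => X c i₁ j) := by rw [h2, mul_one]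
    _ ≤ tnorm X :=
        le_ciSup (f := fun i => specNorm (Matrix.of fun x y => X x i y))
          (Set.Finite.bddAbove (Set.finite_range _)) i₁

lemma vnorm_fiber_le_supNorm3 {m ℓ₁ ℓ₂ : ℕ} (ΔB : Fin m → Fin ℓ₁ → Fin ℓ₂ → ℝ)
    (i₁ : Fin ℓ₁) (i₂ : Fin ℓ₂) :
    vnorm (fun j => ΔB j i₁ i₂) ≤ Real.sqrt m * supNorm3 ΔB := by
  rcases Nat.eq_zero_or_pos m with hm | hm
  · subst hm
    rw [vnorm_eq]
    simp
  · have hb : ∀ j, |ΔB j i₁ i₂| ≤ supNorm3 ΔB := fun j =>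
      le_ciSup (f := fun q : Fin m × Fin ℓ₁ × Fin ℓ₂ => |ΔB q.1 q.2.1 q.2.2|)
        (Set.Finite.bddAbove (Set.finite_range _))
        ((⟨j, i₁, i₂⟩ : Fin m × Fin ℓ₁ × Fin ℓ₂))
    have hs : 0 ≤ supNorm3 ΔB := supNorm3_nonneg ΔB
    rw [vnorm_eq]
    have hsum : (∑ j, ΔB j i₁ i₂ ^ 2) ≤ (m : ℝ) * supNorm3 ΔB ^ 2 := by
      calc (∑ j, ΔB j i₁ i₂ ^ 2) ≤ ∑ _j : Fin m, supNorm3 ΔB ^ 2 :=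
            Finset.sum_le_sum fun j _ => by
              have h := hb j
              nlinarith [abs_nonneg (ΔB j i₁ i₂), sq_abs (ΔB j i₁ i₂)]
        _ = (m : ℝ) * supNorm3 ΔB ^ 2 := by
              simp [Finset.sum_const, nsmul_eq_mul]
    calc Real.sqrt (∑ j, ΔB j i₁ i₂ ^ 2) ≤ Real.sqrt ((m : ℝ) * supNorm3 ΔB ^ 2) :=
          Real.sqrt_le_sqrt hsum
      _ = Real.sqrt m * supNorm3 ΔB := by
          rw [Real.sqrt_mul (by positivity), Real.sqrt_sq hs]

lemma specNorm_le_of_cols {a b : ℕ} (M : Matrix (Fin a) (Fin b) ℝ) {c : ℝ} (hc : 0 ≤ c)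
    (h : ∀ j, vnorm (fun i => M i j) ≤ c) : specNorm M ≤ Real.sqrt b * c := by
  refine specNorm_le_bound _ (by positivity) fun v => ?_
  have hF : (∑ j, ∑ i, M i j ^ 2) ≤ (b : ℝ) * c ^ 2 := by
    calc (∑ j, ∑ i, M i j ^ 2) ≤ ∑ _j : Fin b, c ^ 2 := by
          refine Finset.sum_le_sum fun j _ => ?_
          have hj := h j
          rw [vnorm_eq] at hj
          have h0 : (0:ℝ) ≤ ∑ i, M i j ^ 2 := by positivity
          nlinarith [Real.sq_sqrt h0, Real.sqrt_nonneg (∑ i, M i j ^ 2)]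
      _ = (b : ℝ) * c ^ 2 := by simp [Finset.sum_const, nsmul_eq_mul]
  have hrow : ∀ i, (M *ᵥ v) i ^ 2 ≤ (∑ j, M i j ^ 2) * (∑ j, v j ^ 2) := by
    intro i
    have : (M *ᵥ v) i = ∑ j, M i j * v j := rfl
    rw [this]
    exact Finset.sum_mul_sq_le_sq_mul_sq _ _ _
  have hmain : (∑ i, (M *ᵥ v) i ^ 2) ≤ (b : ℝ) * c ^ 2 * (∑ j, v j ^ 2) := by
    calc (∑ i, (M *ᵥ v) i ^ 2) ≤ ∑ i, (∑ j, M i j ^ 2) * (∑ j, v j ^ 2) :=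
          Finset.sum_le_sum fun i _ => hrow i
      _ = (∑ i, ∑ j, M i j ^ 2) * (∑ j, v j ^ 2) := by rw [Finset.sum_mul]
      _ = (∑ j, ∑ i, M i j ^ 2) * (∑ j, v j ^ 2) := by rw [Finset.sum_comm]
      _ ≤ (b : ℝ) * c ^ 2 * (∑ j, v j ^ 2) := by
          exact mul_le_mul_of_nonneg_right hF (by positivity)
  rw [vnorm_eq, vnorm_eq]
  calc Real.sqrt (∑ i, (M *ᵥ v) i ^ 2)
      ≤ Real.sqrt ((b : ℝ) * c ^ 2 * (∑ j, v j ^ 2)) := Real.sqrt_le_sqrt hmain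
    _ = Real.sqrt b * c * Real.sqrt (∑ j, v j ^ 2) := by
        rw [Real.sqrt_mul (by positivity), Real.sqrt_mul (by positivity), Real.sqrt_sq hc]

lemma fiber_est {a b : ℕ} (A ΔA : Matrix (Fin a) (Fin b) ℝ)
    (h1 : pinv A * A = 1)
    (h2 : pinv (A + ΔA) * (A + ΔA) = 1)
    (hproj : specNorm ((A + ΔA) * pinv (A + ΔA)) ≤ 1)
    (x Δx : Fin b → ℝ) (bb Δb : Fin a → ℝ) (hx : A *ᵥ x = bb)
    (hxp : x + Δx = pinv (A + ΔA) *ᵥ (bb + Δb)) :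
    vnorm Δx ≤ specNorm (pinv A) * (specNorm ΔA * vnorm x + vnorm Δb)
      + specNorm (pinv A) * specNorm ΔA * vnorm Δx := by
  set Ah := A + ΔA with hAh
  set q := pinv Ah with hq
  set P := Ah * q with hPdef
  set r := Δb - ΔA *ᵥ x with hr
  have e2 : bb + Δb = Ah *ᵥ x + r := by
    rw [hr, hAh, Matrix.add_mulVec, hx]
    abel
  have e4 : Ah *ᵥ Δx = P *ᵥ r := by
    have e1 : Ah *ᵥ (x + Δx) = P *ᵥ (bb + Δb) := by
      rw [hxp, Matrix.mulVec_mulVec]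
    have e3 : P *ᵥ (Ah *ᵥ x) = Ah *ᵥ x := by
      rw [Matrix.mulVec_mulVec]
      have : P * Ah = Ah := by
        calc P * Ah = Ah * (q * Ah) := by simp only [hPdef, Matrix.mul_assoc]
          _ = Ah := by rw [hq, hAh, h2, Matrix.mul_one]
      rw [this]
    have := e1
    rw [e2, Matrix.mulVec_add, Matrix.mulVec_add, e3] at this
    exact add_left_cancel this
  have key : Δx = pinv A *ᵥ (P *ᵥ r) - (pinv A * ΔA) *ᵥ Δx := by
    have h5 : pinv A *ᵥ (Ah *ᵥ Δx) = Δx + (pinv A * ΔA) *ᵥ Δx := by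
      rw [Matrix.mulVec_mulVec, hAh, Matrix.mul_add, h1, Matrix.add_mulVec,
        Matrix.one_mulVec]
    rw [e4] at h5
    rw [h5]
    abel
  have hb1 : vnorm (pinv A *ᵥ (P *ᵥ r)) ≤ specNorm (pinv A) * vnorm r := by
    calc vnorm (pinv A *ᵥ (P *ᵥ r)) ≤ specNorm (pinv A) * vnorm (P *ᵥ r) :=
          vnorm_mulVec_le _ _
      _ ≤ specNorm (pinv A) * vnorm r := by
          refine mul_le_mul_of_nonneg_left ?_ (specNorm_nonneg _)
          calc vnorm (P *ᵥ r) ≤ specNorm P * vnorm r := vnorm_mulVec_le _ _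
            _ ≤ 1 * vnorm r := mul_le_mul_of_nonneg_right hproj (vnorm_nonneg _)
            _ = vnorm r := one_mul _
  have hb2 : vnorm ((pinv A * ΔA) *ᵥ Δx) ≤ specNorm (pinv A) * specNorm ΔA * vnorm Δx := by
    calc vnorm ((pinv A * ΔA) *ᵥ Δx) ≤ specNorm (pinv A * ΔA) * vnorm Δx :=
          vnorm_mulVec_le _ _
      _ ≤ specNorm (pinv A) * specNorm ΔA * vnorm Δx :=
          mul_le_mul_of_nonneg_right (specNorm_mul_le _ _) (vnorm_nonneg _)
  have hbr : vnorm r ≤ specNorm ΔA * vnorm x + vnorm Δb := by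
    calc vnorm r ≤ vnorm Δb + vnorm (ΔA *ᵥ x) := vnorm_sub_le _ _
      _ ≤ vnorm Δb + specNorm ΔA * vnorm x := by
          have := vnorm_mulVec_le ΔA x
          linarith
      _ = specNorm ΔA * vnorm x + vnorm Δb := by ring
  calc vnorm Δx = vnorm (pinv A *ᵥ (P *ᵥ r) - (pinv A * ΔA) *ᵥ Δx) := by rw [← key]
    _ ≤ vnorm (pinv A *ᵥ (P *ᵥ r)) + vnorm ((pinv A * ΔA) *ᵥ Δx) := vnorm_sub_le _ _
    _ ≤ specNorm (pinv A) * (specNorm ΔA * vnorm x + vnorm Δb)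
        + specNorm (pinv A) * specNorm ΔA * vnorm Δx := by
        have h6 : vnorm (pinv A *ᵥ (P *ᵥ r))
            ≤ specNorm (pinv A) * (specNorm ΔA * vnorm x + vnorm Δb) :=
          hb1.trans (mul_le_mul_of_nonneg_left hbr (specNorm_nonneg _))
        linarith [hb2]


lemma specNorm_le_zero_of_rows {a b : ℕ} (ha : a = 0) (M : Matrix (Fin a) (Fin b) ℝ) :
    specNorm M ≤ 0 := by
  subst ha
  refine specNorm_le_bound M le_rfl fun v => ?_
  rw [vnorm_eq]
  simp

end PerturbHelpers

/-- Lemma: perturbation of least-squares solutions of tensor equations.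
Let `A ∈ ℝ^{m×n}` have full column rank `n ≤ m` and `ΔA` satisfy `‖A⁺‖·‖ΔA‖ < 1`.
Then `A + ΔA` has rank `n`.  If `X` and `X + ΔX` are the least-squares solutions of
`A ∘ X = B` and `(A + ΔA) ∘ X = B + ΔB` (fiberwise `X(·,i₁,i₂) = A⁺ B(·,i₁,i₂)`), and
every fiber `B(·,i₁,i₂)` lies in the column space of `A`, then
`|||ΔX||| ≤ √(2 m ℓ₂) ‖A⁺‖ / (1 − ‖A⁺‖‖ΔA‖) · (‖ΔA‖ |||X||| + ‖ΔB‖_∞)`; in particular,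
if `|||X||| ≥ χ > 0` and `‖A⁺‖‖ΔA‖ ≤ 1/2`, then
`|||ΔX|||/|||X||| ≤ √(8 m ℓ₂) ‖A⁺‖ (‖ΔA‖ + ‖ΔB‖_∞ χ⁻¹)`. -/
theorem tensor_leastSquares_perturbation
    (m n ℓ₁ ℓ₂ : ℕ) (hnm : n ≤ m)
    (A ΔA : Matrix (Fin m) (Fin n) ℝ)
    (hA : A.rank = n)
    (hpert : specNorm (pinv A) * specNorm ΔA < 1)
    (B ΔB : Fin m → Fin ℓ₁ → Fin ℓ₂ → ℝ)
    (X ΔX : Fin n → Fin ℓ₁ → Fin ℓ₂ → ℝ)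
    (hX : ∀ c i₁ i₂, X c i₁ i₂ = ∑ j, pinv A c j * B j i₁ i₂)
    (hXp : ∀ c i₁ i₂, X c i₁ i₂ + ΔX c i₁ i₂ =
      ∑ j, pinv (A + ΔA) c j * (B j i₁ i₂ + ΔB j i₁ i₂)) :
    (A + ΔA).rank = n ∧
      ((∀ i₁ i₂, (fun j => B j i₁ i₂) ∈ colSpace A) →
        tnorm ΔX ≤
          Real.sqrt (2 * (m : ℝ) * (ℓ₂ : ℝ)) * specNorm (pinv A) /
              (1 - specNorm (pinv A) * specNorm ΔA) *
            (specNorm ΔA * tnorm X + supNorm3 ΔB) ∧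
        ∀ χ : ℝ, 0 < χ → χ ≤ tnorm X →
          specNorm (pinv A) * specNorm ΔA ≤ 1 / 2 →
          tnorm ΔX / tnorm X ≤
            Real.sqrt (8 * (m : ℝ) * (ℓ₂ : ℝ)) * specNorm (pinv A) *
              (specNorm ΔA + supNorm3 ΔB * χ⁻¹)) := by
  classical
  have hAinj : ∀ v, A *ᵥ v = 0 → v = 0 := mulVec_inj_of_rank hA
  have hp1 : pinv A * A = 1 := pinv_mul_self A hAinj
  have hnA : 0 ≤ specNorm (pinv A) := specNorm_nonneg _
  have hnD : 0 ≤ specNorm ΔA := specNorm_nonneg _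
  have hk1 : 0 < 1 - specNorm (pinv A) * specNorm ΔA := by linarith
  have hAhinj : ∀ v, (A + ΔA) *ᵥ v = 0 → v = 0 := by
    intro v hv
    by_contra hne
    have hAv : A *ᵥ v = -(ΔA *ᵥ v) := by
      rw [Matrix.add_mulVec] at hv
      exact eq_neg_of_add_eq_zero_left hv
    have hveq : v = -((pinv A * ΔA) *ᵥ v) := by
      have hvv : pinv A *ᵥ (A *ᵥ v) = v := by
        rw [Matrix.mulVec_mulVec, hp1, Matrix.one_mulVec]
      conv_lhs => rw [← hvv, hAv]
      rw [Matrix.mulVec_neg, Matrix.mulVec_mulVec]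
    have hpos : 0 < vnorm v := by
      rcases (vnorm_nonneg v).lt_or_eq with h | h
      · exact h
      · exact absurd (vnorm_eq_zero h.symm) hne
    have hle : vnorm v ≤ specNorm (pinv A) * specNorm ΔA * vnorm v := by
      calc vnorm v = vnorm ((pinv A * ΔA) *ᵥ v) := by
            conv_lhs => rw [hveq]
            exact vnorm_neg _
        _ ≤ specNorm (pinv A * ΔA) * vnorm v := vnorm_mulVec_le _ _
        _ ≤ specNorm (pinv A) * specNorm ΔA * vnorm v :=
            mul_le_mul_of_nonneg_right (specNorm_mul_le _ _) (vnorm_nonneg _)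
    nlinarith
  refine ⟨rank_of_inj hAhinj, fun hB => ?_⟩
  have hp2 : pinv (A + ΔA) * (A + ΔA) = 1 := pinv_mul_self _ hAhinj
  have hproj : specNorm ((A + ΔA) * pinv (A + ΔA)) ≤ 1 := proj_specNorm_le _ hAhinj
  have htX : 0 ≤ tnorm X := tnorm_nonneg X
  have hsB : 0 ≤ supNorm3 ΔB := supNorm3_nonneg ΔB
  have hfib : ∀ (i₁ : Fin ℓ₁) (i₂ : Fin ℓ₂),
      vnorm (fun c => ΔX c i₁ i₂) ≤ specNorm (pinv A) /
        (1 - specNorm (pinv A) * specNorm ΔA) *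
        (specNorm ΔA * tnorm X + Real.sqrt m * supNorm3 ΔB) := by
    intro i₁ i₂
    obtain ⟨y, hy⟩ : ∃ y, A *ᵥ y = fun j => B j i₁ i₂ := by
      have hmem := hB i₁ i₂
      rw [colSpace, show (Set.range fun c => fun r => A r c) = Set.range A.col from rfl,
        ← Matrix.range_mulVecLin] at hmem
      obtain ⟨y, hy⟩ := hmem
      refine ⟨y, ?_⟩
      simpa [Matrix.mulVecLin_apply] using hy
    have hxdef : (fun c => X c i₁ i₂) = pinv A *ᵥ (fun j => B j i₁ i₂) := by
      funext c
      simpa [Matrix.mulVec, dotProduct] using hX c i₁ i₂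
    have hAx : A *ᵥ (fun c => X c i₁ i₂) = fun j => B j i₁ i₂ := by
      rw [hxdef, ← hy]
      have hyy : pinv A *ᵥ A *ᵥ y = y := by
        rw [Matrix.mulVec_mulVec, hp1, Matrix.one_mulVec]
      rw [hyy]
    have hxp2 : (fun c => X c i₁ i₂) + (fun c => ΔX c i₁ i₂)
        = pinv (A + ΔA) *ᵥ ((fun j => B j i₁ i₂) + fun j => ΔB j i₁ i₂) := by
      funext c
      simpa [Matrix.mulVec, dotProduct, mul_add, Finset.sum_add_distrib]
        using hXp c i₁ i₂
    have hest := fiber_est A ΔA hp1 hp2 hproj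
      (fun c => X c i₁ i₂) (fun c => ΔX c i₁ i₂)
      (fun j => B j i₁ i₂) (fun j => ΔB j i₁ i₂) hAx hxp2
    have hx1 : vnorm (fun c => X c i₁ i₂) ≤ tnorm X := col_enorm_le_tnorm X i₁ i₂
    have hb1 : vnorm (fun j => ΔB j i₁ i₂) ≤ Real.sqrt m * supNorm3 ΔB :=
      vnorm_fiber_le_supNorm3 ΔB i₁ i₂
    rw [div_mul_eq_mul_div, le_div_iff₀ hk1]
    have hW : specNorm ΔA * vnorm (fun c => X c i₁ i₂) + vnorm (fun j => ΔB j i₁ i₂)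
        ≤ specNorm ΔA * tnorm X + Real.sqrt m * supNorm3 ΔB := by
      have := mul_le_mul_of_nonneg_left hx1 hnD
      linarith
    nlinarith [mul_le_mul_of_nonneg_left hW hnA, vnorm_nonneg (fun c => ΔX c i₁ i₂)]
  have hC0 : 0 ≤ Real.sqrt (2 * (m : ℝ) * (ℓ₂ : ℝ)) * specNorm (pinv A) /
      (1 - specNorm (pinv A) * specNorm ΔA) :=
    div_nonneg (mul_nonneg (Real.sqrt_nonneg _) hnA) hk1.le
  have hsum0 : 0 ≤ specNorm ΔA * tnorm X + supNorm3 ΔB :=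
    add_nonneg (mul_nonneg hnD htX) hsB
  have hslice : ∀ i₁ : Fin ℓ₁, specNorm (Matrix.of fun x y => ΔX x i₁ y)
      ≤ Real.sqrt (2 * (m : ℝ) * (ℓ₂ : ℝ)) * specNorm (pinv A) /
          (1 - specNorm (pinv A) * specNorm ΔA) *
        (specNorm ΔA * tnorm X + supNorm3 ΔB) := by
    intro i₁
    rcases Nat.eq_zero_or_pos m with hm | hm
    · have hn0 : n = 0 := by omega
      have h0 := specNorm_le_zero_of_rows hn0 (Matrix.of fun x y => ΔX x i₁ y)
      exact h0.trans (mul_nonneg hC0 hsum0)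
    · have hc0 : 0 ≤ specNorm (pinv A) / (1 - specNorm (pinv A) * specNorm ΔA) *
          (specNorm ΔA * tnorm X + Real.sqrt m * supNorm3 ΔB) := by
        refine mul_nonneg (div_nonneg hnA hk1.le) ?_
        exact add_nonneg (mul_nonneg hnD htX) (mul_nonneg (Real.sqrt_nonneg _) hsB)
      have h1 := specNorm_le_of_cols (Matrix.of fun x y => ΔX x i₁ y) hc0
        (fun j => hfib i₁ j)
      refine h1.trans ?_
      have hm1 : (1 : ℝ) ≤ (m : ℝ) := by exact_mod_cast hm
      have hs1 : Real.sqrt ℓ₂ ≤ Real.sqrt (2 * (m : ℝ) * (ℓ₂ : ℝ)) := by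
        refine Real.sqrt_le_sqrt ?_
        nlinarith [(Nat.cast_nonneg ℓ₂ : (0:ℝ) ≤ (ℓ₂:ℝ))]
      have hs2 : Real.sqrt ℓ₂ * Real.sqrt m ≤ Real.sqrt (2 * (m : ℝ) * (ℓ₂ : ℝ)) := by
        rw [← Real.sqrt_mul (Nat.cast_nonneg _)]
        refine Real.sqrt_le_sqrt ?_
        nlinarith [(Nat.cast_nonneg ℓ₂ : (0:ℝ) ≤ (ℓ₂:ℝ)), (Nat.cast_nonneg m : (0:ℝ) ≤ (m:ℝ))]
      set S := Real.sqrt (2 * (m : ℝ) * (ℓ₂ : ℝ)) with hS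
      set D := specNorm (pinv A) / (1 - specNorm (pinv A) * specNorm ΔA) with hD
      have hD0 : 0 ≤ D := div_nonneg hnA hk1.le
      have key : Real.sqrt ℓ₂ * (specNorm ΔA * tnorm X + Real.sqrt m * supNorm3 ΔB)
          ≤ S * (specNorm ΔA * tnorm X + supNorm3 ΔB) := by
        have t1 : Real.sqrt ℓ₂ * (specNorm ΔA * tnorm X)
            ≤ S * (specNorm ΔA * tnorm X) :=
          mul_le_mul_of_nonneg_right hs1 (mul_nonneg hnD htX)
        have t2 : Real.sqrt ℓ₂ * (Real.sqrt m * supNorm3 ΔB) ≤ S * supNorm3 ΔB := by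
          calc Real.sqrt ℓ₂ * (Real.sqrt m * supNorm3 ΔB)
              = Real.sqrt ℓ₂ * Real.sqrt m * supNorm3 ΔB := by ring
            _ ≤ S * supNorm3 ΔB := mul_le_mul_of_nonneg_right hs2 hsB
        calc Real.sqrt ℓ₂ * (specNorm ΔA * tnorm X + Real.sqrt m * supNorm3 ΔB)
            = Real.sqrt ℓ₂ * (specNorm ΔA * tnorm X)
              + Real.sqrt ℓ₂ * (Real.sqrt m * supNorm3 ΔB) := by ring
          _ ≤ S * (specNorm ΔA * tnorm X) + S * supNorm3 ΔB := add_le_add t1 t2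
          _ = S * (specNorm ΔA * tnorm X + supNorm3 ΔB) := by ring
      calc Real.sqrt ℓ₂ * (D * (specNorm ΔA * tnorm X + Real.sqrt m * supNorm3 ΔB))
          = D * (Real.sqrt ℓ₂ * (specNorm ΔA * tnorm X + Real.sqrt m * supNorm3 ΔB)) := by
            ring
        _ ≤ D * (S * (specNorm ΔA * tnorm X + supNorm3 ΔB)) :=
            mul_le_mul_of_nonneg_left key hD0
        _ = S * specNorm (pinv A) / (1 - specNorm (pinv A) * specNorm ΔA) *
            (specNorm ΔA * tnorm X + supNorm3 ΔB) := by
            rw [hD]; ring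
  have hmain : tnorm ΔX ≤ Real.sqrt (2 * (m : ℝ) * (ℓ₂ : ℝ)) * specNorm (pinv A) /
      (1 - specNorm (pinv A) * specNorm ΔA) *
      (specNorm ΔA * tnorm X + supNorm3 ΔB) := by
    rcases isEmpty_or_nonempty (Fin ℓ₁) with he | he
    · rw [tnorm, Real.iSup_of_isEmpty]
      exact mul_nonneg hC0 hsum0
    · exact ciSup_le hslice
  refine ⟨hmain, fun χ hχ0 hχ hhalf => ?_⟩
  have htXpos : 0 < tnorm X := lt_of_lt_of_le hχ0 hχ
  rw [div_le_iff₀ htXpos]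
  have h8 : Real.sqrt (8 * (m : ℝ) * (ℓ₂ : ℝ)) = 2 * Real.sqrt (2 * (m : ℝ) * (ℓ₂ : ℝ)) := by
    rw [show (8 : ℝ) * (m : ℝ) * (ℓ₂ : ℝ) = 2 ^ 2 * (2 * (m : ℝ) * (ℓ₂ : ℝ)) by ring,
      Real.sqrt_mul (by positivity), Real.sqrt_sq (by norm_num)]
  set S := Real.sqrt (2 * (m : ℝ) * (ℓ₂ : ℝ)) with hS
  have hS0 : 0 ≤ S := Real.sqrt_nonneg _
  have i1 : S * specNorm (pinv A) / (1 - specNorm (pinv A) * specNorm ΔA)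
      ≤ 2 * S * specNorm (pinv A) := by
    rw [div_le_iff₀ hk1]
    nlinarith [mul_nonneg hS0 hnA]
  have i2 : supNorm3 ΔB ≤ supNorm3 ΔB * (tnorm X * χ⁻¹) := by
    have hq : 1 ≤ tnorm X * χ⁻¹ := by
      rw [← div_eq_mul_inv, le_div_iff₀ hχ0, one_mul]
      exact hχ
    nlinarith
  calc tnorm ΔX ≤ S * specNorm (pinv A) / (1 - specNorm (pinv A) * specNorm ΔA) *
        (specNorm ΔA * tnorm X + supNorm3 ΔB) := hmain
    _ ≤ 2 * S * specNorm (pinv A) * (specNorm ΔA * tnorm X + supNorm3 ΔB) :=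
        mul_le_mul_of_nonneg_right i1 hsum0
    _ ≤ 2 * S * specNorm (pinv A) *
        (specNorm ΔA * tnorm X + supNorm3 ΔB * (tnorm X * χ⁻¹)) := by
        refine mul_le_mul_of_nonneg_left ?_ (by positivity)
        linarith
    _ = 2 * S * specNorm (pinv A) * (specNorm ΔA + supNorm3 ΔB * χ⁻¹) * tnorm X := by
        ring
    _ = Real.sqrt (8 * (m : ℝ) * (ℓ₂ : ℝ)) * specNorm (pinv A) *
        (specNorm ΔA + supNorm3 ΔB * χ⁻¹) * tnorm X := by
        rw [h8]
end

section
/- Let d ≥ 2 and let G_1 : [n_1]×[r_1] → ℝ, G_k : [r_{k−1}]×[n_k]×[r_k] → ℝ for k = 2,…,d−1, and G_d : [r_{d−1}]×[n_d] → ℝ, with perturbations ΔG_k of the same shapes. Suppose there exist δ_1,…,δ_d > 0 such that |||ΔG_k||| ≤ δ_k·|||G_k||| for all k = 1,…,d. Define Δ(G_1∘⋯∘G_d) := (G_1+ΔG_1)∘⋯∘(G_d+ΔG_d) − G_1∘⋯∘G_d. Then ‖Δ(G_1∘⋯∘G_d)‖_∞ ≤ |||G_1|||⋯|||G_d||| ·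 (Σ_{k=1}^d δ_k) · exp(Σ_{k=1}^d δ_k). -/
open scoped BigOperators
open Matrix

open scoped Matrix.Norms.L2Operator

lemma specNorm_eq_l2 {m k : Type*} [Fintype m] [Fintype k] [DecidableEq k]
    (A : Matrix m k ℝ) : specNorm A = ‖A‖ := rfl

lemma specNorm_nonneg' {m k : Type*} [Fintype m] [Fintype k] [DecidableEq k]
    (A : Matrix m k ℝ) : 0 ≤ specNorm A := by
  rw [specNorm_eq_l2]; exact norm_nonneg _

lemma specNorm_add_le {m k : Type*} [Fintype m] [Fintype k] [DecidableEq k]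
    (A B : Matrix m k ℝ) : specNorm (A + B) ≤ specNorm A + specNorm B := by
  simp only [specNorm_eq_l2]; exact norm_add_le _ _

lemma norm_vecMul_le {m k : Type*} [Fintype m] [Fintype k] [DecidableEq m] [DecidableEq k]
    (A : Matrix m k ℝ) (v : m → ℝ) :
    ‖(EuclideanSpace.equiv k ℝ).symm (Matrix.vecMul v A)‖ ≤
      specNorm A * ‖(EuclideanSpace.equiv m ℝ).symm v‖ := by
  have h := Matrix.l2_opNorm_mulVec Aᵀ ((EuclideanSpace.equiv m ℝ).symm v)
  rw [Matrix.mulVec_transpose] at h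
  have ht : ‖Aᵀ‖ = ‖A‖ := by
    have hA : Aᵀ = Aᴴ := by ext i j; simp [Matrix.conjTranspose_apply]
    rw [hA, Matrix.l2_opNorm_conjTranspose]
  rw [specNorm_eq_l2, ← ht]
  exact h

lemma abs_apply_le_norm {m : Type*} [Fintype m] (f : m → ℝ) (i : m) :
    |f i| ≤ ‖(EuclideanSpace.equiv m ℝ).symm f‖ := by
  have hc : ∀ j, ((EuclideanSpace.equiv m ℝ).symm f) j = f j := fun _ => rfl
  rw [EuclideanSpace.norm_eq]
  simp only [hc, Real.norm_eq_abs]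
  have h1 : |f i| ^ 2 ≤ ∑ j, |f j| ^ 2 :=
    Finset.single_le_sum (f := fun j => |f j| ^ 2) (fun j _ => sq_nonneg _) (Finset.mem_univ i)
  calc |f i| = Real.sqrt (|f i| ^ 2) := (Real.sqrt_sq (abs_nonneg _)).symm
    _ ≤ _ := Real.sqrt_le_sqrt h1

lemma specNorm_slice_le_tnorm {a b c : ℕ} (G : Fin a → Fin b → Fin c → ℝ) (i : Fin b) :
    specNorm (Matrix.of fun x y => G x i y) ≤ tnorm G :=
  le_ciSup (f := fun i => specNorm (Matrix.of fun x y => G x i y))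
    (Set.Finite.bddAbove (Set.finite_range _)) i

lemma exp_sub_one_le_mul (S : ℝ) : Real.exp S - 1 ≤ S * Real.exp S := by
  have h0 := Real.add_one_le_exp (-S)
  have h1 : (1 - S) * Real.exp S ≤ Real.exp (-S) * Real.exp S :=
    mul_le_mul_of_nonneg_right (by linarith) (Real.exp_pos S).le
  rw [← Real.exp_add, neg_add_cancel, Real.exp_zero] at h1
  nlinarith [h1]

/-- Lemma: perturbation bound for the contraction of cores.
If `|||ΔG_k||| ≤ δ_k |||G_k|||` for all `k = 1, …, d` with `δ_k > 0`, then
`‖(G_1+ΔG_1)∘⋯∘(G_d+ΔG_d) − G_1∘⋯∘G_d‖_∞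
  ≤ |||G_1|||⋯|||G_d||| · (Σ_k δ_k) · exp(Σ_k δ_k)`.
(Here `d = d₀ + 2 ≥ 2`; the first/last cores carry dummy indices of size
`r 0 = 1`, `r d = 1`, for which the slice norm `tnorm` agrees with the Euclidean
row/column norms of the paper.) -/
theorem contraction_perturbation_bound
    (d₀ : ℕ) (n r : ℕ → ℕ) (hr0 : r 0 = 1) (hrd : r (d₀ + 2) = 1)
    (G ΔG : CoreType n r (d₀ + 2)) (δ : Fin (d₀ + 2) → ℝ)
    (hδpos : ∀ k, 0 < δ k)
    (hpert : ∀ k, tnorm (ΔG k) ≤ δ k * tnorm (G k)) :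
    supNormF (fun x => ttContract (fun k => G k + ΔG k) x - ttContract G x) ≤
      (∏ k, tnorm (G k)) * (∑ k, δ k) * Real.exp (∑ k, δ k) := by
  classical
  set G' : CoreType n r (d₀ + 2) := fun k => G k + ΔG k with hG'
  set g : ℕ → ℝ := fun j => if h : j < d₀ + 2 then tnorm (G ⟨j, h⟩) else 1 with hg
  set e : ℕ → ℝ := fun j => if h : j < d₀ + 2 then δ ⟨j, h⟩ else 0 with he
  have hg0 : ∀ j, 0 ≤ g j := by
    intro j; rw [hg]; dsimp only; split
    · exact tnorm_nonneg _
    · exact zero_le_one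
  have he0 : ∀ j, 0 ≤ e j := by
    intro j; rw [he]; dsimp only; split
    · exact (hδpos _).le
    · exact le_rfl
  have hA0 : ∀ k, 0 ≤ ∏ j ∈ Finset.range k, g j :=
    fun k => Finset.prod_nonneg fun j _ => hg0 j
  have hB1 : ∀ k, 1 ≤ ∏ j ∈ Finset.range k, (1 + e j) := by
    intro k
    have h := Finset.prod_le_prod (s := Finset.range k) (f := fun _ => (1:ℝ))
      (g := fun j => 1 + e j) (fun j _ => zero_le_one)
      (fun j _ => by show (1:ℝ) ≤ 1 + e j; linarith [he0 j])
    simpa using h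
  -- bound on the prefix contractions of the unperturbed cores
  have claimP : ∀ (k : ℕ) (hk : k ≤ d₀ + 2) (x : PreIdx n k) (a : Fin (r 0)),
      ‖(EuclideanSpace.equiv (Fin (r k)) ℝ).symm (fun b => ttPrefixF G k hk x a b)‖ ≤
        ∏ j ∈ Finset.range k, g j := by
    intro k
    induction k with
    | zero =>
      intro hk x a
      have hc : ∀ b, ((EuclideanSpace.equiv (Fin (r 0)) ℝ).symm
          (fun b => ttPrefixF G 0 hk x a b)) b
          = (if (a : ℕ) = (b : ℕ) then (1:ℝ) else 0) := fun _ => rfl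
      rw [EuclideanSpace.norm_eq]
      simp only [hc]
      have hsq : ∀ b : Fin (r 0), ‖if (a : ℕ) = (b : ℕ) then (1:ℝ) else 0‖ ^ 2
          = if b = a then 1 else 0 := by
        intro b
        by_cases h : b = a
        · subst h; simp
        · have h2 : ¬((a : ℕ) = (b : ℕ)) := fun hh => h (Fin.ext hh.symm)
          simp [h, h2]
      rw [Finset.sum_congr rfl fun b _ => hsq b]
      simp
    | succ k ih =>
      intro hk x a
      have hk' : k < d₀ + 2 := Nat.lt_of_lt_of_le (Nat.lt_succ_self k) hk
      have hvec : (fun b => ttPrefixF G (k+1) hk x a b) =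
          Matrix.vecMul (fun c => ttPrefixF G k (Nat.le_of_succ_le hk) (takePre x) a c)
            (Matrix.of fun c b => G ⟨k, hk'⟩ c (x (Fin.last k)) b) := by
        funext b
        simp only [ttPrefixF, Matrix.vecMul, dotProduct, Matrix.of_apply]
      have hMn : specNorm (Matrix.of fun c b => G ⟨k, hk'⟩ c (x (Fin.last k)) b) ≤ g k := by
        have h := specNorm_slice_le_tnorm (G ⟨k, hk'⟩) (x (Fin.last k))
        rw [hg]; dsimp only; rw [dif_pos hk']; exact h
      calc ‖(EuclideanSpace.equiv (Fin (r (k+1))) ℝ).symm (fun b => ttPrefixF G (k+1) hk x a b)‖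
          = ‖(EuclideanSpace.equiv (Fin (r (k+1))) ℝ).symm
              (Matrix.vecMul (fun c => ttPrefixF G k (Nat.le_of_succ_le hk) (takePre x) a c)
                (Matrix.of fun c b => G ⟨k, hk'⟩ c (x (Fin.last k)) b))‖ := by rw [hvec]
        _ ≤ specNorm (Matrix.of fun c b => G ⟨k, hk'⟩ c (x (Fin.last k)) b) *
              ‖(EuclideanSpace.equiv (Fin (r k)) ℝ).symm
                (fun c => ttPrefixF G k (Nat.le_of_succ_le hk) (takePre x) a c)‖ :=
            norm_vecMul_le _ _
        _ ≤ g k * ∏ j ∈ Finset.range k, g j :=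
            mul_le_mul hMn (ih (Nat.le_of_succ_le hk) (takePre x) a) (norm_nonneg _) (hg0 k)
        _ = ∏ j ∈ Finset.range (k+1), g j := by rw [Finset.prod_range_succ]; ring
  -- bound on the difference of prefix contractions
  have claimD : ∀ (k : ℕ) (hk : k ≤ d₀ + 2) (x : PreIdx n k) (a : Fin (r 0)),
      ‖(EuclideanSpace.equiv (Fin (r k)) ℝ).symm
          (fun b => ttPrefixF G' k hk x a b - ttPrefixF G k hk x a b)‖ ≤
        (∏ j ∈ Finset.range k, g j) * ((∏ j ∈ Finset.range k, (1 + e j)) - 1) := by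
    intro k
    induction k with
    | zero =>
      intro hk x a
      have hz : (fun b => ttPrefixF G' 0 hk x a b - ttPrefixF G 0 hk x a b)
          = (0 : Fin (r 0) → ℝ) := by
        funext b; simp [ttPrefixF]
      rw [hz, map_zero, norm_zero]
      simp
    | succ k ih =>
      intro hk x a
      have hk' : k < d₀ + 2 := Nat.lt_of_lt_of_le (Nat.lt_succ_self k) hk
      set M : Matrix (Fin (r k)) (Fin (r (k+1))) ℝ :=
        Matrix.of fun c b => G ⟨k, hk'⟩ c (x (Fin.last k)) b with hM
      set Md : Matrix (Fin (r k)) (Fin (r (k+1))) ℝ :=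
        Matrix.of fun c b => ΔG ⟨k, hk'⟩ c (x (Fin.last k)) b with hMd
      have hvec : (fun b => ttPrefixF G' (k+1) hk x a b - ttPrefixF G (k+1) hk x a b) =
          Matrix.vecMul (fun c => ttPrefixF G' k (Nat.le_of_succ_le hk) (takePre x) a c
              - ttPrefixF G k (Nat.le_of_succ_le hk) (takePre x) a c) (M + Md)
          + Matrix.vecMul (fun c => ttPrefixF G k (Nat.le_of_succ_le hk) (takePre x) a c) Md := by
        funext b
        simp only [ttPrefixF, Matrix.vecMul, dotProduct, Matrix.of_apply, hG',
          Pi.add_apply, Matrix.add_apply, hM, hMd]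
        rw [← Finset.sum_sub_distrib, ← Finset.sum_add_distrib]
        refine Finset.sum_congr rfl fun c _ => ?_
        ring
      have hMn : specNorm M ≤ g k := by
        have h := specNorm_slice_le_tnorm (G ⟨k, hk'⟩) (x (Fin.last k))
        rw [hg]; dsimp only; rw [dif_pos hk']; exact h
      have hMdn : specNorm Md ≤ e k * g k := by
        have h := specNorm_slice_le_tnorm (ΔG ⟨k, hk'⟩) (x (Fin.last k))
        have h2 := hpert ⟨k, hk'⟩
        have h3 : e k * g k = δ ⟨k, hk'⟩ * tnorm (G ⟨k, hk'⟩) := by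
          rw [he, hg]; dsimp only; rw [dif_pos hk', dif_pos hk']
        rw [h3]; exact h.trans h2
      have hM'n : specNorm (M + Md) ≤ g k + e k * g k :=
        (specNorm_add_le M Md).trans (add_le_add hMn hMdn)
      have hD := ih (Nat.le_of_succ_le hk) (takePre x) a
      have hP := claimP k (Nat.le_of_succ_le hk) (takePre x) a
      have hstep : ‖(EuclideanSpace.equiv (Fin (r (k+1))) ℝ).symm
          (fun b => ttPrefixF G' (k+1) hk x a b - ttPrefixF G (k+1) hk x a b)‖ ≤
          specNorm (M + Md) * ‖(EuclideanSpace.equiv (Fin (r k)) ℝ).symm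
            (fun c => ttPrefixF G' k (Nat.le_of_succ_le hk) (takePre x) a c
              - ttPrefixF G k (Nat.le_of_succ_le hk) (takePre x) a c)‖
          + specNorm Md * ‖(EuclideanSpace.equiv (Fin (r k)) ℝ).symm
            (fun c => ttPrefixF G k (Nat.le_of_succ_le hk) (takePre x) a c)‖ := by
        rw [hvec, map_add]
        exact (norm_add_le _ _).trans (add_le_add (norm_vecMul_le _ _) (norm_vecMul_le _ _))
      refine hstep.trans ?_
      rw [Finset.prod_range_succ, Finset.prod_range_succ]
      have n1 := norm_nonneg ((EuclideanSpace.equiv (Fin (r k)) ℝ).symm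
        (fun c => ttPrefixF G' k (Nat.le_of_succ_le hk) (takePre x) a c
          - ttPrefixF G k (Nat.le_of_succ_le hk) (takePre x) a c))
      have n2 := norm_nonneg ((EuclideanSpace.equiv (Fin (r k)) ℝ).symm
        (fun c => ttPrefixF G k (Nat.le_of_succ_le hk) (takePre x) a c))
      have n3 := specNorm_nonneg' Md
      have n4 := hg0 k
      have n6 := he0 k
      have n7 := hA0 k
      have n8 := hB1 k
      have h5 := mul_le_mul hM'n hD n1 (add_nonneg n4 (mul_nonneg n6 n4))
      have h6 := mul_le_mul hMdn hP n2 (mul_nonneg n6 n4)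
      nlinarith [h5, h6]
  -- assemble
  have hAeq : (∏ k : Fin (d₀ + 2), tnorm (G k)) = ∏ j ∈ Finset.range (d₀ + 2), g j := by
    rw [← Fin.prod_univ_eq_prod_range g (d₀ + 2)]
    refine Finset.prod_congr rfl fun k _ => ?_
    rw [hg]; dsimp only; rw [dif_pos k.isLt]
  have hSeq : (∑ k : Fin (d₀ + 2), δ k) = ∑ j ∈ Finset.range (d₀ + 2), e j := by
    rw [← Fin.sum_univ_eq_sum_range e (d₀ + 2)]
    refine Finset.sum_congr rfl fun k _ => ?_
    rw [he]; dsimp only; rw [dif_pos k.isLt]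
  set S : ℝ := ∑ j ∈ Finset.range (d₀ + 2), e j with hS
  have hS0 : 0 ≤ S := Finset.sum_nonneg fun j _ => he0 j
  have hBexp : (∏ j ∈ Finset.range (d₀ + 2), (1 + e j)) ≤ Real.exp S := by
    rw [hS, Real.exp_sum]
    refine Finset.prod_le_prod (fun j _ => by linarith [he0 j]) fun j _ => ?_
    linarith [Real.add_one_le_exp (e j)]
  have hKbound : (∏ j ∈ Finset.range (d₀ + 2), g j) *
      ((∏ j ∈ Finset.range (d₀ + 2), (1 + e j)) - 1) ≤
      (∏ k, tnorm (G k)) * (∑ k, δ k) * Real.exp (∑ k, δ k) := by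
    rw [hAeq, hSeq]
    have h1 : (∏ j ∈ Finset.range (d₀ + 2), (1 + e j)) - 1 ≤ S * Real.exp S := by
      have := exp_sub_one_le_mul S
      linarith [hBexp]
    calc (∏ j ∈ Finset.range (d₀ + 2), g j) *
          ((∏ j ∈ Finset.range (d₀ + 2), (1 + e j)) - 1)
        ≤ (∏ j ∈ Finset.range (d₀ + 2), g j) * (S * Real.exp S) :=
          mul_le_mul_of_nonneg_left h1 (hA0 _)
      _ = (∏ j ∈ Finset.range (d₀ + 2), g j) * S * Real.exp S := by ring
  have hRHS0 : 0 ≤ (∏ k, tnorm (G k)) * (∑ k, δ k) * Real.exp (∑ k, δ k) := by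
    have ha : (0:ℝ) ≤ ∏ k, tnorm (G k) := Finset.prod_nonneg fun k _ => tnorm_nonneg _
    have hb : (0:ℝ) ≤ ∑ k, δ k := Finset.sum_nonneg fun k _ => (hδpos k).le
    exact mul_nonneg (mul_nonneg ha hb) (Real.exp_pos _).le
  rw [supNormF]
  refine Real.iSup_le (fun x => ?_) hRHS0
  show |ttContract G' x - ttContract G x| ≤ _
  have h1 : ttContract G' x - ttContract G x =
      ∑ a : Fin (r 0), ∑ b : Fin (r (d₀ + 2)),
        (ttPrefixF G' (d₀ + 2) le_rfl x a b - ttPrefixF G (d₀ + 2) le_rfl x a b) := by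
    simp only [ttContract]
    rw [← Finset.sum_sub_distrib]
    exact Finset.sum_congr rfl fun a _ => by rw [← Finset.sum_sub_distrib]
  have hentry : ∀ (a : Fin (r 0)) (b : Fin (r (d₀ + 2))),
      |ttPrefixF G' (d₀ + 2) le_rfl x a b - ttPrefixF G (d₀ + 2) le_rfl x a b| ≤
        (∏ j ∈ Finset.range (d₀ + 2), g j) *
          ((∏ j ∈ Finset.range (d₀ + 2), (1 + e j)) - 1) := by
    intro a b
    exact (abs_apply_le_norm
      (fun b => ttPrefixF G' (d₀ + 2) le_rfl x a b - ttPrefixF G (d₀ + 2) le_rfl x a b) b).trans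
      (claimD (d₀ + 2) le_rfl x a)
  calc |ttContract G' x - ttContract G x|
      = |∑ a : Fin (r 0), ∑ b : Fin (r (d₀ + 2)),
          (ttPrefixF G' (d₀ + 2) le_rfl x a b - ttPrefixF G (d₀ + 2) le_rfl x a b)| := by rw [h1]
    _ ≤ ∑ a : Fin (r 0), |∑ b : Fin (r (d₀ + 2)),
          (ttPrefixF G' (d₀ + 2) le_rfl x a b - ttPrefixF G (d₀ + 2) le_rfl x a b)| :=
        Finset.abs_sum_le_sum_abs _ _
    _ ≤ ∑ a : Fin (r 0), ∑ b : Fin (r (d₀ + 2)),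
          |ttPrefixF G' (d₀ + 2) le_rfl x a b - ttPrefixF G (d₀ + 2) le_rfl x a b| :=
        Finset.sum_le_sum fun a _ => Finset.abs_sum_le_sum_abs _ _
    _ ≤ ∑ _a : Fin (r 0), ∑ _b : Fin (r (d₀ + 2)),
          (∏ j ∈ Finset.range (d₀ + 2), g j) *
            ((∏ j ∈ Finset.range (d₀ + 2), (1 + e j)) - 1) :=
        Finset.sum_le_sum fun a _ => Finset.sum_le_sum fun b _ => hentry a b
    _ = (∏ j ∈ Finset.range (d₀ + 2), g j) *
          ((∏ j ∈ Finset.range (d₀ + 2), (1 + e j)) - 1) := by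
        simp [Finset.sum_const, Finset.card_univ, hr0, hrd]
    _ ≤ _ := hKbound
end

section
/- Let d ≥ 2. For k = 1,…,d−1 let A_k ∈ ℝ^{m_k×r_k} have full column rank r_k. Let B_1 ∈ ℝ^{n_1×r_1}, B_k ∈ ℝ^{m_{k−1}×n_k×r_k} for k = 2,…,d−1, and B_d ∈ ℝ^{m_{d−1}×n_d}, and assume that for each k = 2,…,d the fibers B_k(·,x_k,α_k) (resp. B_d(·,x_d)) all lie in the column space of A_{k−1}, so that the system G_1 = B_1, A_{k−1}∘G_k = B_k (k = 2,…,d−1), A_{d−1}G_d = B_d has exact solutions G_1,…,G_d; assume |||G_k||| > 0 for all k. Set r = max_{1≤k≤d−1} r_k, m = max_{1≤k≤d−1} m_k, n = max_{1≤k≤d} n_k, c_G = min_{1≤k≤d} |||G_k|||, c_A = max(1, max_{1≤k≤d−1} ‖A_k⁺‖), and β = (√(8 r max(m,n)) · c_A · (1 + 1/c_G))⁻¹. Given δ ∈ (0,1), suppose perturbations ΔA_1,…,ΔA_{d−1}, ΔB_1,…,ΔB_d of the same shapes satisfy ‖ΔA_k‖ ≤ δβ for all k = 1,…,d−1 and ‖ΔB_k‖_∞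 ≤ δβ for all k = 1,…,d. Then the perturbed system with coefficients A_k+ΔA_k and right-hand sides B_k+ΔB_k has least-squares solutions G_k + ΔG_k (i.e., G_1+ΔG_1 = B_1+ΔB_1 and G_k+ΔG_k = (A_{k−1}+ΔA_{k−1})⁺∘(B_k+ΔB_k) for k ≥ 2), and these satisfy |||ΔG_k|||/|||G_k||| ≤ δ for every k = 1,…,d. -/
open scoped BigOperators
open Matrix
set_option maxHeartbeats 1000000

/-- The admissible perturbation size
`β = (√(8 r max(m, n)) · c_A · (1 + 1/c_G))⁻¹`, where `r = max_{1≤k≤d-1} r_k`,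
`m = max_{1≤k≤d-1} m_k`, `n = max_{1≤k≤d} n_k`, `c_G = min_k |||G_k|||`, and
`c_A = max(1, max_{1≤k≤d-1} ‖A_k⁺‖)` (here `d = d₀ + 2`). -/
noncomputable def pertBound (d₀ : ℕ) (n r m : ℕ → ℕ) (G : CoreType n r (d₀ + 2))
    (A : ∀ k : ℕ, Matrix (Fin (m k)) (Fin (r k)) ℝ) : ℝ :=
  (Real.sqrt (8 * ((Finset.univ.sup fun j : Fin (d₀ + 1) => r ((j : ℕ) + 1) : ℕ) : ℝ) *
        ((max (Finset.univ.sup fun j : Fin (d₀ + 1) => m ((j : ℕ) + 1))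
            (Finset.univ.sup fun j : Fin (d₀ + 2) => n (j : ℕ)) : ℕ) : ℝ)) *
      (max 1 (⨆ j : Fin (d₀ + 1), specNorm (pinv (A ((j : ℕ) + 1))))) *
      (1 + 1 / ⨅ k : Fin (d₀ + 2), tnorm (G k)))⁻¹


open scoped Matrix.Norms.L2Operator RealInnerProductSpace

section CorePertAux
open scoped Matrix.Norms.L2Operator RealInnerProductSpace

/-- Euclidean-space packaging of a plain vector. -/
noncomputable abbrev CorePert.eV {k : ℕ} (v : Fin k → ℝ) : EuclideanSpace ℝ (Fin k) :=
  (WithLp.equiv 2 (Fin k → ℝ)).symm v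

namespace CorePert

lemma specNorm_eq {a b : ℕ} (M : Matrix (Fin a) (Fin b) ℝ) : specNorm M = ‖M‖ := rfl

lemma eV_norm {k : ℕ} (v : Fin k → ℝ) : ‖eV v‖ = Real.sqrt (∑ i, (v i)^2) := by
  rw [EuclideanSpace.norm_eq]
  simp [Real.norm_eq_abs, sq_abs]

lemma inner_eV {k : ℕ} (v w : Fin k → ℝ) : ⟪eV v, eV w⟫ = ∑ i, v i * w i := by
  simp [PiLp.inner_apply, RCLike.inner_apply, mul_comm]

lemma adjoint_identity {a b : ℕ} (M : Matrix (Fin a) (Fin b) ℝ) (v : Fin b → ℝ)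
    (w : Fin a → ℝ) : ⟪eV (M *ᵥ v), eV w⟫ = ⟪eV v, eV (Mᵀ *ᵥ w)⟫ := by
  simp only [inner_eV, Matrix.mulVec, dotProduct, Matrix.transpose_apply,
    Finset.sum_mul, Finset.mul_sum]
  rw [Finset.sum_comm]
  exact Finset.sum_congr rfl fun i _ => Finset.sum_congr rfl fun j _ => by ring

lemma opNorm_le' {a b : ℕ} (M : Matrix (Fin a) (Fin b) ℝ) {c : ℝ} (hc : 0 ≤ c)
    (h : ∀ v : Fin b → ℝ, ‖eV (M *ᵥ v)‖ ≤ c * ‖eV v‖) : ‖M‖ ≤ c := by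
  rw [Matrix.l2_opNorm_def]
  exact ContinuousLinearMap.opNorm_le_bound _ hc fun x => h ((WithLp.equiv 2 (Fin b → ℝ)) x)

lemma norm_mulVec_le {a b : ℕ} (M : Matrix (Fin a) (Fin b) ℝ) (v : Fin b → ℝ) :
    ‖eV (M *ᵥ v)‖ ≤ ‖M‖ * ‖eV v‖ := M.l2_opNorm_mulVec (eV v)

lemma opNorm_le_of_entries {a b : ℕ} (M : Matrix (Fin a) (Fin b) ℝ) {c : ℝ} (hc : 0 ≤ c)
    (h : ∀ i j, |M i j| ≤ c) : ‖M‖ ≤ Real.sqrt (a * b) * c := by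
  refine opNorm_le' M (by positivity) fun v => ?_
  rw [eV_norm, eV_norm]
  have key : ∑ i, (M.mulVec v i)^2 ≤ (a * b * c^2) * ∑ j, (v j)^2 := by
    have h1 : ∀ i : Fin a, (M.mulVec v i)^2 ≤ (b * c^2) * ∑ j, (v j)^2 := by
      intro i
      have h2 : (M.mulVec v i)^2 ≤ (∑ j, (M i j)^2) * ∑ j, (v j)^2 := by
        have := Finset.sum_mul_sq_le_sq_mul_sq Finset.univ (fun j => M i j) v
        simpa [Matrix.mulVec, dotProduct] using this
      refine h2.trans ?_
      have h3 : ∑ j, (M i j)^2 ≤ (b : ℝ) * c^2 := by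
        calc ∑ j, (M i j)^2 ≤ ∑ _j : Fin b, c^2 := by
              refine Finset.sum_le_sum fun j _ => ?_
              have := h i j
              nlinarith [abs_nonneg (M i j), sq_abs (M i j)]
          _ = (b : ℝ) * c^2 := by simp [mul_comm]
      have hv : 0 ≤ ∑ j, (v j)^2 := by positivity
      exact mul_le_mul_of_nonneg_right h3 hv
    calc ∑ i, (M.mulVec v i)^2 ≤ ∑ _i : Fin a, (b * c^2) * ∑ j, (v j)^2 :=
          Finset.sum_le_sum fun i _ => h1 i
      _ = (a * b * c^2) * ∑ j, (v j)^2 := by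
          rw [Finset.sum_const, Finset.card_univ, Fintype.card_fin, nsmul_eq_mul]; ring
  calc Real.sqrt (∑ i, (M.mulVec v i)^2) ≤ Real.sqrt ((a*b*c^2) * ∑ j, (v j)^2) :=
        Real.sqrt_le_sqrt key
    _ = Real.sqrt ((a:ℝ)*b) * c * Real.sqrt (∑ j, (v j)^2) := by
        rw [Real.sqrt_mul (by positivity), Real.sqrt_mul (by positivity)]
        rw [Real.sqrt_sq hc]

lemma eV_eq_zero {k : ℕ} {v : Fin k → ℝ} (h : ‖eV v‖ = 0) : v = 0 := by
  have : eV v = 0 := norm_eq_zero.mp h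
  funext i
  exact congrFun (congrArg (WithLp.equiv 2 (Fin k → ℝ)) this) i

lemma inj_of_lower {a b : ℕ} {M : Matrix (Fin a) (Fin b) ℝ} {σ : ℝ} (hσ : 0 < σ)
    (h : ∀ w : Fin b → ℝ, σ * ‖eV w‖ ≤ ‖eV (M *ᵥ w)‖) :
    ∀ w : Fin b → ℝ, M *ᵥ w = 0 → w = 0 := by
  intro w hw
  have h0 := h w
  rw [hw] at h0
  simp only [show eV (0 : Fin a → ℝ) = 0 from rfl, norm_zero] at h0
  exact eV_eq_zero (le_antisymm (by nlinarith [norm_nonneg (eV w)]) (norm_nonneg _))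

lemma gram_det_ne_zero {a b : ℕ} (M : Matrix (Fin a) (Fin b) ℝ)
    (hinj : ∀ w : Fin b → ℝ, M *ᵥ w = 0 → w = 0) : IsUnit (Mᵀ * M).det := by
  rw [isUnit_iff_ne_zero]
  intro hdet
  obtain ⟨v, hv, hv0⟩ := (Matrix.exists_mulVec_eq_zero_iff.2 hdet)
  have hker : M *ᵥ v = 0 := by
    have hv' : v ∈ LinearMap.ker (Mᵀ * M).mulVecLin :=
      LinearMap.mem_ker.mpr (by rw [Matrix.mulVecLin_apply]; exact hv0)
    rw [Matrix.ker_mulVecLin_transpose_mul_self M] at hv'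
    have := LinearMap.mem_ker.mp hv'
    rwa [Matrix.mulVecLin_apply] at this
  exact hv (hinj v hker)

lemma pinv_mul {a b : ℕ} (M : Matrix (Fin a) (Fin b) ℝ)
    (hinj : ∀ w : Fin b → ℝ, M *ᵥ w = 0 → w = 0) : pinv M * M = 1 := by
  rw [pinv, Matrix.mul_assoc]
  exact Matrix.nonsing_inv_mul _ (gram_det_ne_zero M hinj)

lemma pinv_apply_bound {a b : ℕ} (M : Matrix (Fin a) (Fin b) ℝ) {σ : ℝ} (hσ : 0 < σ)
    (h : ∀ w : Fin b → ℝ, σ * ‖eV w‖ ≤ ‖eV (M *ᵥ w)‖) (v : Fin a → ℝ) :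
    ‖eV (pinv M *ᵥ v)‖ ≤ σ⁻¹ * ‖eV v‖ := by
  have hinj := inj_of_lower hσ h
  set w : Fin b → ℝ := pinv M *ᵥ v with hwdef
  have hMtM : (Mᵀ * M) *ᵥ w = Mᵀ *ᵥ v := by
    have hmm : (Mᵀ * M) * pinv M = Mᵀ := by
      rw [pinv, ← Matrix.mul_assoc, Matrix.mul_nonsing_inv _ (gram_det_ne_zero M hinj),
        Matrix.one_mul]
    rw [hwdef, Matrix.mulVec_mulVec, hmm]
  have key : ‖eV (M *ᵥ w)‖ ≤ ‖eV v‖ := by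
    have h1 : ‖eV (M *ᵥ w)‖^2 = ⟪eV (M *ᵥ w), eV v⟫ := by
      rw [← real_inner_self_eq_norm_sq, adjoint_identity, adjoint_identity M w v, ← hMtM,
        Matrix.mulVec_mulVec]
    have h2 : ⟪eV (M *ᵥ w), eV v⟫ ≤ ‖eV (M *ᵥ w)‖ * ‖eV v‖ := real_inner_le_norm _ _
    nlinarith [norm_nonneg (eV (M *ᵥ w)), norm_nonneg (eV v)]
  have := (h w).trans key
  rw [inv_mul_eq_div, le_div_iff₀ hσ, mul_comm]
  exact this

lemma pinv_opNorm_bound {a b : ℕ} (M : Matrix (Fin a) (Fin b) ℝ) {σ : ℝ} (hσ : 0 < σ)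
    (h : ∀ w : Fin b → ℝ, σ * ‖eV w‖ ≤ ‖eV (M *ᵥ w)‖) : ‖pinv M‖ ≤ σ⁻¹ :=
  opNorm_le' _ (by positivity) (pinv_apply_bound M hσ h)

lemma inj_of_rank {a b : ℕ} (A : Matrix (Fin a) (Fin b) ℝ) (h : A.rank = b) :
    ∀ w : Fin b → ℝ, A *ᵥ w = 0 → w = 0 := by
  have h1 := LinearMap.finrank_range_add_finrank_ker A.mulVecLin
  have h2 : Module.finrank ℝ (Fin b → ℝ) = b := by simp
  have h3 : Module.finrank ℝ (LinearMap.range A.mulVecLin) = b := h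
  have hker : Module.finrank ℝ (LinearMap.ker A.mulVecLin) = 0 := by omega
  have hbot : LinearMap.ker A.mulVecLin = ⊥ := Submodule.finrank_eq_zero.mp hker
  intro w hw
  have hmem : w ∈ LinearMap.ker A.mulVecLin := by
    rw [LinearMap.mem_ker, Matrix.mulVecLin_apply]; exact hw
  rw [hbot] at hmem
  simpa using hmem

lemma specNorm_zero_rows {a b : ℕ} (ha : a = 0) (M : Matrix (Fin a) (Fin b) ℝ) :
    specNorm M = 0 := by
  subst ha
  haveI : Subsingleton (EuclideanSpace ℝ (Fin 0)) :=
    ⟨fun x y => PiLp.ext fun i => Fin.elim0 i⟩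
  rw [specNorm_eq]
  refine le_antisymm (opNorm_le' M le_rfl fun v => ?_) (norm_nonneg _)
  rw [Subsingleton.elim (eV (M *ᵥ v)) 0, norm_zero, zero_mul]

lemma tnorm_le {a b c : ℕ} (X : Fin a → Fin b → Fin c → ℝ) {t : ℝ} (ht : 0 ≤ t)
    (h : ∀ i, specNorm (Matrix.of fun x y => X x i y) ≤ t) : tnorm X ≤ t :=
  Real.iSup_le h ht

lemma le_tnorm {a b c : ℕ} (X : Fin a → Fin b → Fin c → ℝ) (i : Fin b) :
    specNorm (Matrix.of fun x y => X x i y) ≤ tnorm X := by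
  unfold tnorm
  exact le_ciSup (f := fun i : Fin b => specNorm (Matrix.of fun x y => X x i y))
    (Set.Finite.bddAbove (Set.finite_range _)) i

lemma tnorm_empty_mid {a b c : ℕ} (hb : b = 0) (X : Fin a → Fin b → Fin c → ℝ) :
    tnorm X = 0 := by
  subst hb
  exact Real.iSup_of_isEmpty _

lemma core_step {mm rr rr' : ℕ} (A ΔA : Matrix (Fin mm) (Fin rr) ℝ)
    (Gx Gpx : Matrix (Fin rr) (Fin rr') ℝ) (Bx ΔBx : Matrix (Fin mm) (Fin rr') ℝ)
    {cA : ℝ} (hcA : 1 ≤ cA)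
    (hA : ∀ w : Fin rr → ℝ, cA⁻¹ * ‖eV w‖ ≤ ‖eV (A *ᵥ w)‖)
    (hΔA : ‖ΔA‖ ≤ (2*cA)⁻¹)
    (hB : A * Gx = Bx)
    (hGp : Gpx = pinv (A + ΔA) * (Bx + ΔBx)) :
    ‖Gpx - Gx‖ ≤ 2*cA*(‖ΔBx‖ + ‖ΔA‖ * ‖Gx‖) := by
  have hcA0 : (0:ℝ) < cA := lt_of_lt_of_le one_pos hcA
  have hσ : (0:ℝ) < (2*cA)⁻¹ := by positivity
  set M := A + ΔA with hMdef
  have hM : ∀ w : Fin rr → ℝ, (2*cA)⁻¹ * ‖eV w‖ ≤ ‖eV (M *ᵥ w)‖ := by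
    intro w
    have h1 := hA w
    have h2 : ‖eV (ΔA *ᵥ w)‖ ≤ (2*cA)⁻¹ * ‖eV w‖ :=
      (norm_mulVec_le ΔA w).trans (mul_le_mul_of_nonneg_right hΔA (norm_nonneg _))
    have hsplit : eV (A *ᵥ w) = eV (M *ᵥ w) - eV (ΔA *ᵥ w) := by
      rw [hMdef, Matrix.add_mulVec]
      simp only [CorePert.eV, WithLp.equiv_symm_apply, WithLp.toLp_add, WithLp.toLp_sub]
      abel
    have h3 : ‖eV (A *ᵥ w)‖ ≤ ‖eV (M *ᵥ w)‖ + ‖eV (ΔA *ᵥ w)‖ := by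
      rw [hsplit]; exact norm_sub_le _ _
    have heq : cA⁻¹ * ‖eV w‖ = 2*((2*cA)⁻¹ * ‖eV w‖) := by
      field_simp
    linarith
  have hinjM := inj_of_lower hσ hM
  have hpm : pinv M * M = 1 := pinv_mul M hinjM
  have hkey : Gpx - Gx = pinv M * (ΔBx - ΔA * Gx) := by
    have hBplus : Bx + ΔBx = M * Gx + (ΔBx - ΔA * Gx) := by
      rw [← hB, hMdef, Matrix.add_mul]
      abel
    rw [hGp, hBplus, Matrix.mul_add, ← Matrix.mul_assoc, hpm, Matrix.one_mul]
    abel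
  rw [hkey]
  calc ‖pinv M * (ΔBx - ΔA * Gx)‖ ≤ ‖pinv M‖ * ‖ΔBx - ΔA * Gx‖ := Matrix.l2_opNorm_mul _ _
    _ ≤ (2*cA) * (‖ΔBx‖ + ‖ΔA‖ * ‖Gx‖) := by
        have hp : ‖pinv M‖ ≤ 2*cA := by
          have := pinv_opNorm_bound M hσ hM
          rwa [inv_inv] at this
        have hd : ‖ΔBx - ΔA * Gx‖ ≤ ‖ΔBx‖ + ‖ΔA‖ * ‖Gx‖ :=
          (norm_sub_le _ _).trans (by
            have := Matrix.l2_opNorm_mul ΔA Gx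
            linarith)
        exact mul_le_mul hp hd (norm_nonneg _) (by positivity)

end CorePert
end CorePertAux


/-- Lemma: stability of the core determining system.
Let `A_k` (`k = 1, …, d-1`) have full column rank `r_k`, let the fibers of the
right-hand sides `B_k` lie in the column spaces of the corresponding `A_{k-1}`, and
let `G_1, …, G_d` be the exact solutions of the system `G_1 = B_1`,
`A_{k-1} ∘ G_k = B_k`, `A_{d-1} G_d = B_d`, with `|||G_k||| > 0`.  If all perturbations
satisfy `‖ΔA_k‖ ≤ δβ` and `‖ΔB_k‖_∞ ≤ δβ` with `β` as in `pertBound`, then the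
least-squares solutions `G_k + ΔG_k` of the perturbed system satisfy
`|||ΔG_k||| / |||G_k||| ≤ δ` for every `k`.
(Here `d = d₀ + 2 ≥ 2`, 0-based: `Bmid j` / `A j` for `1 ≤ j ≤ d₀ + 1` are the paper's
`B_{j+1}` / `A_j`; the first/last cores carry dummy indices of size `r 0 = r d = 1`.) -/
theorem core_system_perturbation
    (d₀ : ℕ) (n r m : ℕ → ℕ) (hr0 : r 0 = 1) (hrd : r (d₀ + 2) = 1)
    (A ΔA : ∀ k : ℕ, Matrix (Fin (m k)) (Fin (r k)) ℝ)
    (hArank : ∀ k, 1 ≤ k → k ≤ d₀ + 1 → (A k).rank = r k)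
    (B1 ΔB1 : Fin (n 0) → Fin (r 1) → ℝ)
    (Bmid ΔBmid : ∀ j : ℕ, Fin (m j) → Fin (n j) → Fin (r (j + 1)) → ℝ)
    (Bd ΔBd : Fin (m (d₀ + 1)) → Fin (n (d₀ + 1)) → ℝ)
    (hfib_mid : ∀ j, 1 ≤ j → j ≤ d₀ → ∀ x α,
      (fun β => Bmid j β x α) ∈ colSpace (A j))
    (hfib_last : ∀ x, (fun β => Bd β x) ∈ colSpace (A (d₀ + 1)))
    (G : CoreType n r (d₀ + 2))
    (hG1 : ∀ (a : Fin (r 0)) (x : Fin (n 0)) (α : Fin (r 1)),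
      G ⟨0, by omega⟩ a x α = B1 x α)
    (hGmid : ∀ j : ℕ, ∀ _hj1 : 1 ≤ j, ∀ _hj2 : j ≤ d₀,
      ∀ (β : Fin (m j)) (x : Fin (n j)) (α : Fin (r (j + 1))),
      (∑ c : Fin (r j), A j β c * G ⟨j, by omega⟩ c x α) = Bmid j β x α)
    (hGlast : ∀ (β : Fin (m (d₀ + 1))) (x : Fin (n (d₀ + 1))) (b : Fin (r (d₀ + 2))),
      (∑ c : Fin (r (d₀ + 1)), A (d₀ + 1) β c * G ⟨d₀ + 1, by omega⟩ c x b) = Bd β x)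
    (hGpos : ∀ k : Fin (d₀ + 2), 0 < tnorm (G k))
    (δ : ℝ) (hδ0 : 0 < δ) (hδ1 : δ < 1)
    (hΔA : ∀ k, 1 ≤ k → k ≤ d₀ + 1 →
      specNorm (ΔA k) ≤ δ * pertBound d₀ n r m G A)
    (hΔB1 : ∀ x α, |ΔB1 x α| ≤ δ * pertBound d₀ n r m G A)
    (hΔBmid : ∀ j, 1 ≤ j → j ≤ d₀ → ∀ β x α,
      |ΔBmid j β x α| ≤ δ * pertBound d₀ n r m G A)
    (hΔBd : ∀ β x, |ΔBd β x| ≤ δ * pertBound d₀ n r m G A)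
    (Gp : CoreType n r (d₀ + 2))
    (hGp1 : ∀ (a : Fin (r 0)) (x : Fin (n 0)) (α : Fin (r 1)),
      Gp ⟨0, by omega⟩ a x α = B1 x α + ΔB1 x α)
    (hGpmid : ∀ j : ℕ, ∀ _hj1 : 1 ≤ j, ∀ _hj2 : j ≤ d₀,
      ∀ (c : Fin (r j)) (x : Fin (n j)) (α : Fin (r (j + 1))),
      Gp ⟨j, by omega⟩ c x α =
        ∑ β : Fin (m j), pinv (A j + ΔA j) c β * (Bmid j β x α + ΔBmid j β x α))
    (hGplast : ∀ (c : Fin (r (d₀ + 1))) (x : Fin (n (d₀ + 1))) (b : Fin (r (d₀ + 2))),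
      Gp ⟨d₀ + 1, by omega⟩ c x b =
        ∑ β : Fin (m (d₀ + 1)),
          pinv (A (d₀ + 1) + ΔA (d₀ + 1)) c β * (Bd β x + ΔBd β x)) :
    ∀ k : Fin (d₀ + 2),
      tnorm (fun a x b => Gp k a x b - G k a x b) / tnorm (G k) ≤ δ := by
  classical
  set Rn : ℕ := Finset.univ.sup (fun j : Fin (d₀ + 1) => r ((j : ℕ) + 1)) with hRn
  set Mn : ℕ := Finset.univ.sup (fun j : Fin (d₀ + 1) => m ((j : ℕ) + 1)) with hMn
  set Nn : ℕ := Finset.univ.sup (fun j : Fin (d₀ + 2) => n (j : ℕ)) with hNn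
  set cAv : ℝ := max 1 (⨆ j : Fin (d₀ + 1), specNorm (pinv (A ((j : ℕ) + 1)))) with hcAv
  set cGv : ℝ := ⨅ kk : Fin (d₀ + 2), tnorm (G kk) with hcGv
  set tv : ℝ := 1 + 1 / cGv with htvdef
  set S : ℝ := Real.sqrt (8 * (Rn : ℝ) * ((max Mn Nn : ℕ) : ℝ)) with hSdef
  set βv : ℝ := pertBound d₀ n r m G A with hβv
  have hβeq : βv = (S * cAv * tv)⁻¹ := rfl
  -- basic positivity facts
  have hcGpos : 0 < cGv := by
    obtain ⟨i0, hi0⟩ := exists_eq_ciInf_of_finite (f := fun kk : Fin (d₀ + 2) => tnorm (G kk))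
    rw [hcGv, ← hi0]
    exact hGpos i0
  have hcG_le : ∀ kk : Fin (d₀ + 2), cGv ≤ tnorm (G kk) := by
    intro kk
    rw [hcGv]
    exact ciInf_le (Set.Finite.bddBelow (Set.finite_range _)) kk
  have hcA1 : (1:ℝ) ≤ cAv := le_max_left _ _
  have hcApos : (0:ℝ) < cAv := lt_of_lt_of_le one_pos hcA1
  have htv1 : (1:ℝ) ≤ tv := by
    rw [htvdef]
    have h : 0 < 1 / cGv := by positivity
    linarith
  have htvpos : (0:ℝ) < tv := lt_of_lt_of_le one_pos htv1
  have hct : cGv * tv = cGv + 1 := by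
    rw [htvdef]
    field_simp
  -- dimension facts
  have hn_pos : ∀ kk : Fin (d₀ + 2), 0 < n (kk : ℕ) := by
    intro kk
    by_contra hle
    have h0 : n (kk : ℕ) = 0 := by omega
    have hz := CorePert.tnorm_empty_mid h0 (G kk)
    have := hGpos kk
    linarith
  have hr_pos : ∀ kk : Fin (d₀ + 2), 0 < r (kk : ℕ) := by
    intro kk
    by_contra hle
    have h0 : r (kk : ℕ) = 0 := by omega
    have hz : tnorm (G kk) ≤ 0 :=
      CorePert.tnorm_le _ le_rfl fun i => le_of_eq (CorePert.specNorm_zero_rows h0 _)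
    linarith [hGpos kk]
  have hm_ge : ∀ j, 1 ≤ j → j ≤ d₀ + 1 → r j ≤ m j := by
    intro j h1 h2
    have h := (A j).rank_le_card_height
    rw [hArank j h1 h2, Fintype.card_fin] at h
    exact h
  -- sup facts
  have hRn_ge : ∀ j : Fin (d₀ + 1), r ((j : ℕ) + 1) ≤ Rn := by
    intro j; rw [hRn]
    exact Finset.le_sup (f := fun j : Fin (d₀ + 1) => r ((j : ℕ) + 1)) (Finset.mem_univ j)
  have hMn_ge : ∀ j : Fin (d₀ + 1), m ((j : ℕ) + 1) ≤ Mn := by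
    intro j; rw [hMn]
    exact Finset.le_sup (f := fun j : Fin (d₀ + 1) => m ((j : ℕ) + 1)) (Finset.mem_univ j)
  have hNn_ge : ∀ j : Fin (d₀ + 2), n (j : ℕ) ≤ Nn := by
    intro j; rw [hNn]
    exact Finset.le_sup (f := fun j : Fin (d₀ + 2) => n (j : ℕ)) (Finset.mem_univ j)
  have hr1pos : 0 < r 1 := hr_pos ⟨1, by omega⟩
  have hRn1 : 1 ≤ Rn := le_trans hr1pos (hRn_ge ⟨0, by omega⟩)
  have hMN1 : 1 ≤ max Mn Nn :=
    le_trans (le_trans (hn_pos ⟨0, by omega⟩) (hNn_ge ⟨0, by omega⟩)) (le_max_right Mn Nn)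
  have hRn1R : (1:ℝ) ≤ (Rn : ℝ) := by exact_mod_cast hRn1
  have hMN1R : (1:ℝ) ≤ ((max Mn Nn : ℕ) : ℝ) := by exact_mod_cast hMN1
  have hargS : (0:ℝ) ≤ 8 * (Rn : ℝ) * ((max Mn Nn : ℕ) : ℝ) := by positivity
  have hS2 : (2:ℝ) ≤ S := by
    rw [hSdef, Real.le_sqrt (by norm_num) hargS]
    nlinarith
  have hSpos : (0:ℝ) < S := lt_of_lt_of_le two_pos hS2
  have hβpos : 0 < βv := by
    rw [hβeq]
    exact inv_pos.mpr (mul_pos (mul_pos hSpos hcApos) htvpos)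
  have hδβ_nonneg : 0 ≤ δ * βv := mul_nonneg hδ0.le hβpos.le
  have hδβ_le_inv2cA : δ * βv ≤ (2 * cAv)⁻¹ := by
    have h1 : δ * βv ≤ βv := by nlinarith
    refine h1.trans ?_
    rw [hβeq]
    refine inv_anti₀ (by positivity) ?_
    nlinarith [mul_nonneg (mul_nonneg hSpos.le hcApos.le) (sub_nonneg.2 htv1),
      mul_nonneg hcApos.le (sub_nonneg.2 hS2)]
  -- lower singular-value bound for the unperturbed matrices
  have hcA_ge : ∀ j : Fin (d₀ + 1), specNorm (pinv (A ((j : ℕ) + 1))) ≤ cAv := by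
    intro j
    rw [hcAv]
    exact le_trans
      (le_ciSup (f := fun j : Fin (d₀ + 1) => specNorm (pinv (A ((j : ℕ) + 1))))
        (Set.Finite.bddAbove (Set.finite_range _)) j)
      (le_max_right _ _)
  have hAlow : ∀ j, 1 ≤ j → j ≤ d₀ + 1 →
      ∀ w : Fin (r j) → ℝ, cAv⁻¹ * ‖CorePert.eV w‖ ≤ ‖CorePert.eV (A j *ᵥ w)‖ := by
    intro j hj1 hj2 w
    have hinj := CorePert.inj_of_rank (A j) (hArank j hj1 hj2)
    have hpm := CorePert.pinv_mul (A j) hinj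
    have hw : pinv (A j) *ᵥ (A j *ᵥ w) = w := by
      rw [Matrix.mulVec_mulVec, hpm, Matrix.one_mulVec]
    have h1 : ‖CorePert.eV w‖ ≤ ‖pinv (A j)‖ * ‖CorePert.eV (A j *ᵥ w)‖ := by
      conv_lhs => rw [← hw]
      exact CorePert.norm_mulVec_le _ _
    have h2 : ‖pinv (A j)‖ ≤ cAv := by
      have hidx : (j - 1) + 1 = j := by omega
      have h : specNorm (pinv (A ((j - 1) + 1))) ≤ cAv := hcA_ge ⟨j - 1, by omega⟩
      rw [CorePert.specNorm_eq, hidx] at h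
      exact h
    rw [inv_mul_le_iff₀ hcApos]
    calc ‖CorePert.eV w‖ ≤ ‖pinv (A j)‖ * ‖CorePert.eV (A j *ᵥ w)‖ := h1
      _ ≤ cAv * ‖CorePert.eV (A j *ᵥ w)‖ := mul_le_mul_of_nonneg_right h2 (norm_nonneg _)
  -- the generic perturbation step
  have hstep : ∀ (j : ℕ), 1 ≤ j → j ≤ d₀ + 1 →
      ∀ (Gx Gpx : Matrix (Fin (r j)) (Fin (r (j + 1))) ℝ)
        (Bx ΔBx : Matrix (Fin (m j)) (Fin (r (j + 1))) ℝ) (tG : ℝ),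
        0 < tG → cGv ≤ tG → ‖Gx‖ ≤ tG →
        (∀ i l, |ΔBx i l| ≤ δ * βv) →
        A j * Gx = Bx → Gpx = pinv (A j + ΔA j) * (Bx + ΔBx) →
        ‖Gpx - Gx‖ ≤ δ * tG := by
    intro j hj1 hj2 Gx Gpx Bx ΔBx tG htG hcGtG hGx hΔBx hB hGp
    have hΔAj2 : ‖ΔA j‖ ≤ δ * βv := by
      have h := hΔA j hj1 hj2
      rwa [CorePert.specNorm_eq] at h
    have hΔAj : ‖ΔA j‖ ≤ (2 * cAv)⁻¹ := hΔAj2.trans hδβ_le_inv2cA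
    have hcs := CorePert.core_step (A j) (ΔA j) Gx Gpx Bx ΔBx hcA1 (hAlow j hj1 hj2) hΔAj hB hGp
    have hqB : ‖ΔBx‖ ≤ Real.sqrt ((m j : ℝ) * (r (j + 1) : ℝ)) * (δ * βv) :=
      CorePert.opNorm_le_of_entries _ hδβ_nonneg hΔBx
    set q : ℝ := Real.sqrt ((m j : ℝ) * (r (j + 1) : ℝ)) with hqdef
    have hmj1 : (1:ℝ) ≤ (m j : ℝ) := by
      have := le_trans (hr_pos ⟨j, by omega⟩) (hm_ge j hj1 hj2)
      exact_mod_cast this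
    have hrj1 : (1:ℝ) ≤ (r (j + 1) : ℝ) := by
      rcases Nat.lt_or_ge j (d₀ + 1) with hlt | hge
      · have := hr_pos ⟨j + 1, by omega⟩
        exact_mod_cast this
      · have hj : j = d₀ + 1 := by omega
        have hh : r (j + 1) = 1 := by rw [hj]; exact hrd
        rw [hh]; norm_num
    have hrj1R : (r (j + 1) : ℝ) ≤ (Rn : ℝ) := by
      rcases Nat.lt_or_ge j (d₀ + 1) with hlt | hge
      · have := hRn_ge ⟨j, by omega⟩
        exact_mod_cast this
      · have hj : j = d₀ + 1 := by omega
        have hh : r (j + 1) = 1 := by rw [hj]; exact hrd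
        rw [hh]; exact_mod_cast hRn1
    have hmjM : (m j : ℝ) ≤ ((max Mn Nn : ℕ) : ℝ) := by
      have h1 : m j ≤ Mn := by
        have hidx : (j - 1) + 1 = j := by omega
        have hh : m ((j - 1) + 1) ≤ Mn := hMn_ge ⟨j - 1, by omega⟩
        rwa [hidx] at hh
      exact_mod_cast le_trans h1 (le_max_left _ _)
    have hq0 : (0:ℝ) ≤ q := Real.sqrt_nonneg _
    have hq1 : (1:ℝ) ≤ q := by
      rw [hqdef, show (1:ℝ) = Real.sqrt 1 from Real.sqrt_one.symm]
      exact Real.sqrt_le_sqrt (by nlinarith)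
    have hq2 : q ^ 2 = (m j : ℝ) * (r (j + 1) : ℝ) := Real.sq_sqrt (by positivity)
    have h2q : 2 * q ≤ S := by
      have hx : (0:ℝ) ≤ 2 * q := by linarith
      rw [hSdef, Real.le_sqrt hx hargS]
      nlinarith
    refine hcs.trans ?_
    have hGx0 : (0:ℝ) ≤ ‖Gx‖ := norm_nonneg _
    have hbd : ‖ΔBx‖ + ‖ΔA j‖ * ‖Gx‖ ≤ q * (δ * βv) + (δ * βv) * tG := by
      have h := mul_le_mul hΔAj2 hGx hGx0 hδβ_nonneg
      linarith [hqB]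
    have hmain : 2 * cAv * βv * (q + tG) ≤ tG := by
      rw [hβeq, show 2 * cAv * (S * cAv * tv)⁻¹ * (q + tG)
          = (2 * cAv * (q + tG)) * (S * cAv * tv)⁻¹ from by ring,
        mul_inv_le_iff₀ (by positivity)]
      have e2 : cGv * (tG * ((2 * q) * cAv * tv)) = 2 * q * cAv * tG * (cGv + 1) := by
        have h : cGv * (tG * ((2 * q) * cAv * tv)) = 2 * q * cAv * tG * (cGv * tv) := by ring
        rw [h, hct]
      have e3 : cGv * (2 * cAv * (q + tG)) ≤ 2 * q * cAv * tG * (cGv + 1) := by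
        nlinarith [mul_nonneg (mul_nonneg (mul_nonneg (sub_nonneg.2 hq1) hcApos.le) htG.le)
            hcGpos.le,
          mul_nonneg (mul_nonneg (sub_nonneg.2 hcGtG) hcApos.le) (le_trans zero_le_one hq1)]
      have e4 : cGv * (2 * cAv * (q + tG)) ≤ cGv * (tG * ((2 * q) * cAv * tv)) := by
        rw [e2]; exact e3
      have e5 : 2 * cAv * (q + tG) ≤ tG * ((2 * q) * cAv * tv) :=
        le_of_mul_le_mul_left e4 hcGpos
      refine e5.trans ?_
      nlinarith [mul_nonneg (mul_nonneg (mul_nonneg htG.le hcApos.le) htvpos.le)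
        (sub_nonneg.2 h2q)]
    have h2c : (0:ℝ) ≤ 2 * cAv := by linarith
    calc 2 * cAv * (‖ΔBx‖ + ‖ΔA j‖ * ‖Gx‖)
        ≤ 2 * cAv * (q * (δ * βv) + (δ * βv) * tG) := mul_le_mul_of_nonneg_left hbd h2c
      _ = δ * (2 * cAv * βv * (q + tG)) := by ring
      _ ≤ δ * tG := mul_le_mul_of_nonneg_left hmain hδ0.le
  -- now the main goal
  intro k
  obtain ⟨kv, hklt⟩ := k
  have htGk : 0 < tnorm (G ⟨kv, hklt⟩) := hGpos _
  rw [div_le_iff₀ htGk]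
  refine CorePert.tnorm_le _ (mul_nonneg hδ0.le htGk.le) fun x => ?_
  rcases Nat.eq_zero_or_pos kv with rfl | hkv1
  · -- first core
    have hent : ∀ (a : Fin (r 0)) (α : Fin (r 1)),
        |(Matrix.of fun a b => Gp ⟨0, hklt⟩ a x b - G ⟨0, hklt⟩ a x b) a α| ≤ δ * βv := by
      intro a α
      show |Gp ⟨0, hklt⟩ a x α - G ⟨0, hklt⟩ a x α| ≤ δ * βv
      rw [hGp1 a x α, hG1 a x α]
      simpa using hΔB1 x α
    have hsn := CorePert.opNorm_le_of_entries _ hδβ_nonneg hent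
    rw [CorePert.specNorm_eq]
    refine hsn.trans ?_
    have hr0R : ((r 0 : ℕ) : ℝ) = 1 := by rw [hr0]; norm_num
    have hsq : Real.sqrt ((r 0 : ℝ) * (r 1 : ℝ)) = Real.sqrt (r 1 : ℝ) := by
      rw [hr0R, one_mul]
    set u : ℝ := Real.sqrt (r 1 : ℝ) with hudef
    have hu0 : (0:ℝ) ≤ u := Real.sqrt_nonneg _
    have hu2 : u ^ 2 = (r 1 : ℝ) := Real.sq_sqrt (by positivity)
    have hr1R : (1:ℝ) ≤ (r 1 : ℝ) := by exact_mod_cast hr1pos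
    have hr1Rn : ((r 1 : ℕ) : ℝ) ≤ (Rn : ℝ) := by
      have := hRn_ge ⟨0, by omega⟩
      exact_mod_cast this
    have h2u : 2 * u ≤ S := by
      have hx : (0:ℝ) ≤ 2 * u := by linarith
      rw [hSdef, Real.le_sqrt hx hargS]
      nlinarith
    have hSCT : (0:ℝ) < S * cAv * tv := mul_pos (mul_pos hSpos hcApos) htvpos
    have g1 : (1:ℝ) ≤ cGv * tv := by rw [hct]; linarith
    have g2 : cGv * tv ≤ cGv * tv * cAv :=
      le_mul_of_one_le_right (le_trans zero_le_one g1) hcA1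
    have f1 : S ≤ cGv * (S * cAv * tv) := by
      calc S = S * 1 := (mul_one S).symm
        _ ≤ S * (cGv * tv * cAv) := mul_le_mul_of_nonneg_left (g1.trans g2) hSpos.le
        _ = cGv * (S * cAv * tv) := by ring
    have hub : u ≤ cGv * (S * cAv * tv) := by linarith
    have hkey : u * βv ≤ cGv := by
      rw [hβeq]
      calc u * (S * cAv * tv)⁻¹ ≤ (cGv * (S * cAv * tv)) * (S * cAv * tv)⁻¹ :=
            mul_le_mul_of_nonneg_right hub (inv_nonneg.2 hSCT.le)
        _ = cGv := by field_simp
    have hchain : Real.sqrt ((r 0 : ℝ) * (r 1 : ℝ)) * (δ * βv) ≤ δ * tnorm (G ⟨0, hklt⟩) := by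
      rw [hsq]
      have h1 : u * βv ≤ tnorm (G ⟨0, hklt⟩) := hkey.trans (hcG_le ⟨0, hklt⟩)
      calc u * (δ * βv) = δ * (u * βv) := by ring
        _ ≤ δ * tnorm (G ⟨0, hklt⟩) := mul_le_mul_of_nonneg_left h1 hδ0.le
    exact hchain
  · -- middle and last cores
    have hkle : kv ≤ d₀ + 1 := by omega
    set Gx : Matrix (Fin (r kv)) (Fin (r (kv + 1))) ℝ :=
      Matrix.of (fun c α => G ⟨kv, hklt⟩ c x α) with hGxdef
    set Gpx : Matrix (Fin (r kv)) (Fin (r (kv + 1))) ℝ :=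
      Matrix.of (fun c α => Gp ⟨kv, hklt⟩ c x α) with hGpxdef
    have hGxle : ‖Gx‖ ≤ tnorm (G ⟨kv, hklt⟩) := by
      rw [← CorePert.specNorm_eq]
      exact CorePert.le_tnorm (G ⟨kv, hklt⟩) x
    have hgoal : (Matrix.of fun a b => Gp ⟨kv, hklt⟩ a x b - G ⟨kv, hklt⟩ a x b)
        = Gpx - Gx := by
      ext a b
      simp [hGxdef, hGpxdef, Matrix.sub_apply]
    rw [CorePert.specNorm_eq, hgoal]
    rcases Nat.lt_or_ge kv (d₀ + 1) with hmid | hlast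
    · -- middle core
      have hkd0 : kv ≤ d₀ := by omega
      refine hstep kv hkv1 hkle Gx Gpx
        (Matrix.of fun i l => Bmid kv i x l) (Matrix.of fun i l => ΔBmid kv i x l)
        (tnorm (G ⟨kv, hklt⟩)) htGk (hcG_le _) hGxle
        (fun i l => hΔBmid kv hkv1 hkd0 i x l) ?_ ?_
      · ext i l
        simpa [Matrix.mul_apply, hGxdef] using hGmid kv hkv1 hkd0 i x l
      · ext c l
        simpa [Matrix.mul_apply, Matrix.add_apply, hGpxdef] using hGpmid kv hkv1 hkd0 c x l
    · -- last core
      have hkeq : kv = d₀ + 1 := by omega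
      subst hkeq
      refine hstep (d₀ + 1) hkv1 hkle Gx Gpx
        (Matrix.of fun i l => Bd i x) (Matrix.of fun i l => ΔBd i x)
        (tnorm (G ⟨d₀ + 1, hklt⟩)) htGk (hcG_le _) hGxle
        (fun i l => hΔBd i x) ?_ ?_
      · ext i l
        simpa [Matrix.mul_apply, hGxdef] using hGlast i x l
      · ext c l
        simpa [Matrix.mul_apply, Matrix.add_apply, hGpxdef] using hGplast c x l
end
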